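/- Consider the four-party circuit of Fig. 1 with quantum outputs: with notation as in the canonical circuit, for each 3-element subset S of {A,B,C,D} and each 2-element subset T ⊂ S fix a finite-dimensional complex Hilbert space H_{S,T}; for each 2-element subset T and X ∈ T fix K_{T,X}; let ψ_S be a unit vector in ⊗_{T⊂S} H_{S,T} for each source S, and U_T a linear isometric equivalence from ⊗_{S⊃T} H_{S,T} onto ⊗_{X∈T} K_{T,X} for each transformation T. For each party X, let V_X be a linear isometry from ⊗_{T∋X} K_{T,X} into ℂ² ⊗ E_X for some finite-dimensional complex Hilbert space E_X (the party's output qubit and local environment). Then there do not exist a unit vector χ ∈ E_A ⊗ E_B ⊗ E_C ⊗ E_D such that (V_A ⊗ V_B ⊗ V_C ⊗ V_D) U |ψ⟩ = |GHZ₄⟩ ⊗ |χ⟩ (up to the canonical reordering of tensor factors), where |ψ⟩ is the tensor product of the four source states, U is the tensor product of the six unitaries, and |GHZ₄⟩ = (|0000⟩ + |1111⟩)/√2 ∈ (ℂ²)^{⊗4}. -/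

import Mathlib

open scoped Matrix

/-!
**Obtaining a four-partite GHZ state requires a quantum common cause**, in the canonical
four-party circuit of Fig. 1 with quantum outputs.

Sources are the 3-element subsets `ABC, ABD, ACD, BCD` of the parties `A, B, C, D`;
transformations are the 2-element subsets `AB, AC, AD, BC, BD, CD`.  For each source `S`
and each 2-element subset `T ⊂ S` there is a finite-dimensional complex Hilbert space
`H_{S,T}` (modelled concretely as `ℂ^{iS_T}` for a finite index type `iS_T`), for each
transformation `T` and party `X ∈ T` a space `K_{T,X}` (modelled as `ℂ^{kT_X}`), and for
each party `X` a local environment `E_X` (modelled as `ℂ^{εX}`).  Tensor products of these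
spaces are modelled as spaces of `ℂ`-valued functions on the product of the index types with
the standard inner product; tensor products of vectors, unitaries and isometries are given
entrywise by products of the entries of the factors, which also realizes the canonical
reordering of tensor factors.  Each party applies an isometry `V_X` from its incoming
systems into `ℂ² ⊗ E_X` (output qubit and environment).
-/

section

variable {iABC_AB iABC_AC iABC_BC iABD_AB iABD_AD iABD_BD
    iACD_AC iACD_AD iACD_CD iBCD_BC iBCD_BD iBCD_CD : Type}
variable [Fintype iABC_AB] [Fintype iABC_AC] [Fintype iABC_BC]
  [Fintype iABD_AB] [Fintype iABD_AD] [Fintype iABD_BD]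
  [Fintype iACD_AC] [Fintype iACD_AD] [Fintype iACD_CD]
  [Fintype iBCD_BC] [Fintype iBCD_BD] [Fintype iBCD_CD]
variable [DecidableEq iABC_AB] [DecidableEq iABC_AC] [DecidableEq iABC_BC]
  [DecidableEq iABD_AB] [DecidableEq iABD_AD] [DecidableEq iABD_BD]
  [DecidableEq iACD_AC] [DecidableEq iACD_AD] [DecidableEq iACD_CD]
  [DecidableEq iBCD_BC] [DecidableEq iBCD_BD] [DecidableEq iBCD_CD]
variable {kAB_A kAB_B kAC_A kAC_C kAD_A kAD_D kBC_B kBC_C kBD_B kBD_D kCD_C kCD_D : Type}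
variable [Fintype kAB_A] [Fintype kAB_B] [Fintype kAC_A] [Fintype kAC_C]
  [Fintype kAD_A] [Fintype kAD_D] [Fintype kBC_B] [Fintype kBC_C]
  [Fintype kBD_B] [Fintype kBD_D] [Fintype kCD_C] [Fintype kCD_D]
variable [DecidableEq kAB_A] [DecidableEq kAB_B] [DecidableEq kAC_A] [DecidableEq kAC_C]
  [DecidableEq kAD_A] [DecidableEq kAD_D] [DecidableEq kBC_B] [DecidableEq kBC_C]
  [DecidableEq kBD_B] [DecidableEq kBD_D] [DecidableEq kCD_C] [DecidableEq kCD_D]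
variable {εA εB εC εD : Type}
variable [Fintype εA] [Fintype εB] [Fintype εC] [Fintype εD]

/-- The global output vector `(V_A ⊗ V_B ⊗ V_C ⊗ V_D) U |ψ⟩` of the canonical circuit,
as an element of `(ℂ² ⊗ E_A) ⊗ (ℂ² ⊗ E_B) ⊗ (ℂ² ⊗ E_C) ⊗ (ℂ² ⊗ E_D)`, where `|ψ⟩` is the
tensor product of the four source states and `U` the tensor product of the six
transformation unitaries. -/
noncomputable def circuitOutput
    (ψABC : iABC_AB × iABC_AC × iABC_BC → ℂ)
    (ψABD : iABD_AB × iABD_AD × iABD_BD → ℂ)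
    (ψACD : iACD_AC × iACD_AD × iACD_CD → ℂ)
    (ψBCD : iBCD_BC × iBCD_BD × iBCD_CD → ℂ)
    (UAB : Matrix (kAB_A × kAB_B) (iABC_AB × iABD_AB) ℂ)
    (UAC : Matrix (kAC_A × kAC_C) (iABC_AC × iACD_AC) ℂ)
    (UAD : Matrix (kAD_A × kAD_D) (iABD_AD × iACD_AD) ℂ)
    (UBC : Matrix (kBC_B × kBC_C) (iABC_BC × iBCD_BC) ℂ)
    (UBD : Matrix (kBD_B × kBD_D) (iABD_BD × iBCD_BD) ℂ)
    (UCD : Matrix (kCD_C × kCD_D) (iACD_CD × iBCD_CD) ℂ)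
    (VA : Matrix (Fin 2 × εA) (kAB_A × kAC_A × kAD_A) ℂ)
    (VB : Matrix (Fin 2 × εB) (kAB_B × kBC_B × kBD_B) ℂ)
    (VC : Matrix (Fin 2 × εC) (kAC_C × kBC_C × kCD_C) ℂ)
    (VD : Matrix (Fin 2 × εD) (kAD_D × kBD_D × kCD_D) ℂ) :
    (Fin 2 × εA) × (Fin 2 × εB) × (Fin 2 × εC) × (Fin 2 × εD) → ℂ :=
  -- the global source state |ψ⟩ = ψ_ABC ⊗ ψ_ABD ⊗ ψ_ACD ⊗ ψ_BCD
  let Ψ : (iABC_AB × iABC_AC × iABC_BC) × (iABD_AB × iABD_AD × iABD_BD) ×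
      (iACD_AC × iACD_AD × iACD_CD) × (iBCD_BC × iBCD_BD × iBCD_CD) → ℂ :=
    fun x => ψABC x.1 * ψABD x.2.1 * ψACD x.2.2.1 * ψBCD x.2.2.2
  -- the global unitary U = U_AB ⊗ U_AC ⊗ U_AD ⊗ U_BC ⊗ U_BD ⊗ U_CD (with reordering)
  let U : Matrix
      ((kAB_A × kAB_B) × (kAC_A × kAC_C) × (kAD_A × kAD_D) ×
        (kBC_B × kBC_C) × (kBD_B × kBD_D) × (kCD_C × kCD_D))
      ((iABC_AB × iABC_AC × iABC_BC) × (iABD_AB × iABD_AD × iABD_BD) ×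
        (iACD_AC × iACD_AD × iACD_CD) × (iBCD_BC × iBCD_BD × iBCD_CD)) ℂ :=
    fun k x =>
      UAB k.1 (x.1.1, x.2.1.1) *
      UAC k.2.1 (x.1.2.1, x.2.2.1.1) *
      UAD k.2.2.1 (x.2.1.2.1, x.2.2.1.2.1) *
      UBC k.2.2.2.1 (x.1.2.2, x.2.2.2.1) *
      UBD k.2.2.2.2.1 (x.2.1.2.2, x.2.2.2.2.1) *
      UCD k.2.2.2.2.2 (x.2.2.1.2.2, x.2.2.2.2.2)
  -- the global isometry V_A ⊗ V_B ⊗ V_C ⊗ V_D (with reordering)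
  let V : Matrix ((Fin 2 × εA) × (Fin 2 × εB) × (Fin 2 × εC) × (Fin 2 × εD))
      ((kAB_A × kAB_B) × (kAC_A × kAC_C) × (kAD_A × kAD_D) ×
        (kBC_B × kBC_C) × (kBD_B × kBD_D) × (kCD_C × kCD_D)) ℂ :=
    fun w k =>
      VA w.1 (k.1.1, k.2.1.1, k.2.2.1.1) *
      VB w.2.1 (k.1.2, k.2.2.2.1.1, k.2.2.2.2.1.1) *
      VC w.2.2.1 (k.2.1.2, k.2.2.2.1.2, k.2.2.2.2.2.1) *
      VD w.2.2.2 (k.2.2.1.2, k.2.2.2.2.1.2, k.2.2.2.2.2.2)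
  V *ᵥ (U *ᵥ Ψ)

/-- The four-partite GHZ state `(|0000⟩ + |1111⟩)/√2 ∈ (ℂ²)^{⊗4}`. -/
noncomputable def ghz4 (q1 q2 q3 q4 : Fin 2) : ℂ :=
  if (q1 = 0 ∧ q2 = 0 ∧ q3 = 0 ∧ q4 = 0) ∨ (q1 = 1 ∧ q2 = 1 ∧ q3 = 1 ∧ q4 = 1) then
    ((1 : ℝ) / Real.sqrt 2 : ℝ) else 0


namespace GhzNoGo
open Matrix

variable {l m n o p q r : Type*}

/-- Entrywise (Kronecker) tensor product of matrices. -/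
def kron (A : Matrix m n ℂ) (B : Matrix p q ℂ) : Matrix (m × p) (n × q) ℂ :=
  Matrix.of fun i j => A i.1 j.1 * B i.2 j.2

@[simp] lemma kron_apply (A : Matrix m n ℂ) (B : Matrix p q ℂ) (i j) :
    kron A B i j = A i.1 j.1 * B i.2 j.2 := rfl

lemma kron_mul [Fintype n] [Fintype q] (A : Matrix m n ℂ) (B : Matrix p q ℂ)
    (C : Matrix n o ℂ) (D : Matrix q r ℂ) :
    kron A B * kron C D = kron (A * C) (B * D) := by
  ext i j
  simp only [Matrix.mul_apply, kron_apply, Fintype.sum_prod_type]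
  rw [Finset.sum_mul_sum]
  apply Finset.sum_congr rfl; intro k1 _; apply Finset.sum_congr rfl; intro k2 _
  ring

lemma kron_conjT (A : Matrix m n ℂ) (B : Matrix p q ℂ) :
    (kron A B)ᴴ = kron Aᴴ Bᴴ := by
  ext i j; simp [kron, Matrix.conjTranspose_apply, mul_comm]

lemma kron_one [DecidableEq m] [DecidableEq p] :
    kron (1 : Matrix m m ℂ) (1 : Matrix p p ℂ) = 1 := by
  ext i j
  simp only [kron_apply, Matrix.one_apply, Prod.ext_iff]
  split_ifs <;> simp_all

lemma kron_diagonal [DecidableEq m] [DecidableEq p] (a : m → ℂ) (b : p → ℂ) :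
    kron (Matrix.diagonal a) (Matrix.diagonal b)
      = Matrix.diagonal (fun i : m × p => a i.1 * b i.2) := by
  ext ⟨i1, i2⟩ ⟨j1, j2⟩
  simp only [kron_apply, Matrix.diagonal_apply, Prod.ext_iff]
  split_ifs <;> simp_all

lemma kron_conj_mul [Fintype m] [Fintype p] [Fintype n] [Fintype q]
    (A : Matrix m n ℂ) (A' : Matrix p q ℂ) (d : Matrix m m ℂ) (d' : Matrix p p ℂ) :
    (kron A A')ᴴ * (kron d d' * kron A A') = kron (Aᴴ * (d * A)) (A'ᴴ * (d' * A')) := by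
  rw [kron_mul, kron_conjT, kron_mul]

lemma kron_iso [Fintype m] [Fintype p] [DecidableEq n] [DecidableEq q]
    (A : Matrix m n ℂ) (B : Matrix p q ℂ) (hA : Aᴴ * A = 1) (hB : Bᴴ * B = 1) :
    (kron A B)ᴴ * kron A B = 1 := by
  rw [kron_conjT, kron_mul, hA, hB, kron_one]

lemma kron_coiso [Fintype n] [Fintype q] [DecidableEq m] [DecidableEq p]
    (A : Matrix m n ℂ) (B : Matrix p q ℂ) (hA : A * Aᴴ = 1) (hB : B * Bᴴ = 1) :
    kron A B * (kron A B)ᴴ = 1 := by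
  rw [kron_conjT, kron_mul, hA, hB, kron_one]

lemma kron4_diag_mulVec {w1 w2 w3 w4 : Type} [Fintype w1] [Fintype w2] [Fintype w3]
    [Fintype w4] [DecidableEq w1] [DecidableEq w2] [DecidableEq w3] [DecidableEq w4]
    (a : w1 → ℂ) (b : w2 → ℂ) (c : w3 → ℂ) (d : w4 → ℂ)
    (φ : w1 × w2 × w3 × w4 → ℂ) (w : w1 × w2 × w3 × w4) :
    (kron (Matrix.diagonal a)
        (kron (Matrix.diagonal b) (kron (Matrix.diagonal c) (Matrix.diagonal d))) *ᵥ φ) w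
      = (a w.1 * b w.2.1 * c w.2.2.1 * d w.2.2.2) * φ w := by
  rw [kron_diagonal, kron_diagonal, kron_diagonal, Matrix.mulVec_diagonal]
  ring

lemma kron_one_mulVec {J n R : Type} [Fintype n] [Fintype R] [DecidableEq R]
    (M : Matrix J n ℂ) (φ : n × R → ℂ) (j : J) (r : R) :
    (kron M (1 : Matrix R R ℂ) *ᵥ φ) (j, r) = ∑ z, M j z * φ (z, r) := by
  simp only [Matrix.mulVec, dotProduct, Fintype.sum_prod_type, kron_apply,
    Matrix.one_apply, mul_ite, ite_mul, mul_one, mul_zero, zero_mul,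
    Finset.sum_ite_eq, Finset.mem_univ, if_true]

lemma iso_dot [Fintype m] [Fintype n] [DecidableEq n] (M : Matrix m n ℂ)
    (hM : Mᴴ * M = 1) (w w' : n → ℂ) :
    star (M *ᵥ w) ⬝ᵥ (M *ᵥ w') = star w ⬝ᵥ w' := by
  rw [Matrix.star_mulVec, ← Matrix.dotProduct_mulVec, Matrix.mulVec_mulVec, hM,
    Matrix.one_mulVec]

lemma exists_ne_zero {α : Type*} [Fintype α] (ψ : α → ℂ) (h : ∑ x, ‖ψ x‖ ^ 2 = (1:ℝ)) :
    ∃ x, ψ x ≠ 0 := by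
  by_contra h'
  push_neg at h'
  simp [h'] at h

lemma conj_mul_self (z : ℂ) : (starRingEnd ℂ) z * z = ((‖z‖ ^ 2 : ℝ) : ℂ) := by
  rw [mul_comm, Complex.mul_conj, Complex.normSq_eq_norm_sq]

lemma sum_conj_mul_self {α : Type*} [Fintype α] (χ : α → ℂ)
    (h : ∑ x, ‖χ x‖ ^ 2 = (1:ℝ)) :
    ∑ x, (starRingEnd ℂ) (χ x) * χ x = 1 := by
  simp_rw [conj_mul_self]
  exact_mod_cast congrArg Complex.ofReal h

lemma sum_mul2 {α β : Type*} [Fintype α] [Fintype β] (f : α → ℂ) (g : β → ℂ) :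
    (∑ x : α × β, f x.1 * g x.2) = (∑ a, f a) * (∑ b, g b) := by
  rw [Fintype.sum_prod_type]
  exact (Finset.sum_mul_sum _ _ _ _).symm

lemma prod_state_norm {α1 α2 α3 α4 : Type} [Fintype α1] [Fintype α2] [Fintype α3]
    [Fintype α4] (ψ1 : α1 → ℂ) (ψ2 : α2 → ℂ) (ψ3 : α3 → ℂ) (ψ4 : α4 → ℂ)
    (h1 : ∑ x, ‖ψ1 x‖ ^ 2 = (1:ℝ)) (h2 : ∑ x, ‖ψ2 x‖ ^ 2 = (1:ℝ))
    (h3 : ∑ x, ‖ψ3 x‖ ^ 2 = (1:ℝ)) (h4 : ∑ x, ‖ψ4 x‖ ^ 2 = (1:ℝ)) :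
    ∑ x : α1 × α2 × α3 × α4,
      (starRingEnd ℂ) (ψ1 x.1 * ψ2 x.2.1 * ψ3 x.2.2.1 * ψ4 x.2.2.2) *
        (ψ1 x.1 * ψ2 x.2.1 * ψ3 x.2.2.1 * ψ4 x.2.2.2) = 1 := by
  have step : ∑ x : α1 × α2 × α3 × α4,
      (starRingEnd ℂ) (ψ1 x.1 * ψ2 x.2.1 * ψ3 x.2.2.1 * ψ4 x.2.2.2) *
        (ψ1 x.1 * ψ2 x.2.1 * ψ3 x.2.2.1 * ψ4 x.2.2.2)
      = ∑ x : α1 × α2 × α3 × α4, ((starRingEnd ℂ) (ψ1 x.1) * ψ1 x.1) *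
          (((starRingEnd ℂ) (ψ2 x.2.1) * ψ2 x.2.1) *
            (((starRingEnd ℂ) (ψ3 x.2.2.1) * ψ3 x.2.2.1) *
              ((starRingEnd ℂ) (ψ4 x.2.2.2) * ψ4 x.2.2.2))) := by
    apply Finset.sum_congr rfl; intro x _
    simp only [_root_.map_mul]; ring
  rw [step]
  rw [sum_mul2 (fun a => (starRingEnd ℂ) (ψ1 a) * ψ1 a)
    (fun y : α2 × α3 × α4 => ((starRingEnd ℂ) (ψ2 y.1) * ψ2 y.1) *
      (((starRingEnd ℂ) (ψ3 y.2.1) * ψ3 y.2.1) *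
        ((starRingEnd ℂ) (ψ4 y.2.2) * ψ4 y.2.2)))]
  rw [sum_mul2 (fun a => (starRingEnd ℂ) (ψ2 a) * ψ2 a)
    (fun y : α3 × α4 => ((starRingEnd ℂ) (ψ3 y.1) * ψ3 y.1) *
      ((starRingEnd ℂ) (ψ4 y.2) * ψ4 y.2))]
  rw [sum_mul2 (fun a => (starRingEnd ℂ) (ψ3 a) * ψ3 a)
    (fun a => (starRingEnd ℂ) (ψ4 a) * ψ4 a)]
  rw [sum_conj_mul_self _ h1, sum_conj_mul_self _ h2, sum_conj_mul_self _ h3,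
    sum_conj_mul_self _ h4]
  ring

lemma ite_and_one (p q : Prop) [Decidable p] [Decidable q] :
    (if p ∧ q then (1:ℂ) else 0) = (if p then (1:ℂ) else 0) * (if q then (1:ℂ) else 0) := by
  split_ifs <;> simp_all

lemma factor_combine {α1 α2 α3 α4 : Type} (u : α1 × α2 × α3 × α4 → ℂ)
    (ψ1 : α1 → ℂ) (ψ2 : α2 → ℂ) (ψ3 : α3 → ℂ) (ψ4 : α4 → ℂ)
    (p2 : α2) (p3 : α3) (p4 : α4)
    (h2 : ψ2 p2 ≠ 0) (h3 : ψ3 p3 ≠ 0) (h4 : ψ4 p4 ≠ 0)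
    (a : α1 × α2 × α3 → ℂ) (b : α1 × α2 × α4 → ℂ) (c : α1 × α3 × α4 → ℂ)
    (d : α2 × α3 × α4 → ℂ)
    (hA : ∀ x : α1 × α2 × α3 × α4, u x = a (x.1, x.2.1, x.2.2.1) * ψ4 x.2.2.2)
    (hB : ∀ x, u x = b (x.1, x.2.1, x.2.2.2) * ψ3 x.2.2.1)
    (hC : ∀ x, u x = c (x.1, x.2.2.1, x.2.2.2) * ψ2 x.2.1)
    (hD : ∀ x, u x = d (x.2.1, x.2.2.1, x.2.2.2) * ψ1 x.1) :
    ∃ μ : ℂ, ∀ x : α1 × α2 × α3 × α4,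
      u x = μ * (ψ1 x.1 * ψ2 x.2.1 * ψ3 x.2.2.1 * ψ4 x.2.2.2) := by
  refine ⟨d (p2, p3, p4) / (ψ2 p2 * ψ3 p3 * ψ4 p4), ?_⟩
  rintro ⟨x1, x2, x3, x4⟩
  have e4 : u (x1, x2, x3, x4) * ψ4 p4 = u (x1, x2, x3, p4) * ψ4 x4 := by
    rw [hA (x1, x2, x3, x4), hA (x1, x2, x3, p4)]; ring
  have e3 : u (x1, x2, x3, p4) * ψ3 p3 = u (x1, x2, p3, p4) * ψ3 x3 := by
    rw [hB (x1, x2, x3, p4), hB (x1, x2, p3, p4)]; ring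
  have e2 : u (x1, x2, p3, p4) * ψ2 p2 = u (x1, p2, p3, p4) * ψ2 x2 := by
    rw [hC (x1, x2, p3, p4), hC (x1, p2, p3, p4)]; ring
  have e1 : u (x1, p2, p3, p4) = d (p2, p3, p4) * ψ1 x1 := hD (x1, p2, p3, p4)
  have key : u (x1, x2, x3, x4) * (ψ2 p2 * ψ3 p3 * ψ4 p4)
      = d (p2, p3, p4) * (ψ1 x1 * ψ2 x2 * ψ3 x3 * ψ4 x4) := by
    calc u (x1, x2, x3, x4) * (ψ2 p2 * ψ3 p3 * ψ4 p4)
        = (u (x1, x2, x3, x4) * ψ4 p4) * ψ3 p3 * ψ2 p2 := by ring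
      _ = (u (x1, x2, x3, p4) * ψ3 p3) * ψ4 x4 * ψ2 p2 := by
          linear_combination (ψ3 p3 * ψ2 p2) * e4
      _ = (u (x1, x2, p3, p4) * ψ2 p2) * ψ3 x3 * ψ4 x4 := by
          linear_combination (ψ4 x4 * ψ2 p2) * e3
      _ = u (x1, p2, p3, p4) * ψ2 x2 * ψ3 x3 * ψ4 x4 := by
          linear_combination (ψ3 x3 * ψ4 x4) * e2
      _ = d (p2, p3, p4) * (ψ1 x1 * ψ2 x2 * ψ3 x3 * ψ4 x4) := by rw [e1]; ring
  have hne : (ψ2 p2 * ψ3 p3 * ψ4 p4) ≠ 0 := by simp [h2, h3, h4]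
  field_simp
  linear_combination key

end GhzNoGo


namespace GhzNoGo
open Matrix

lemma conj_submatrix2 {w k α β : Type} [Fintype w] [Fintype k] [Fintype α] [Fintype β]
    (M : Matrix α β ℂ) (S : Matrix w w ℂ) (r : w ≃ α) (e : k ≃ β) :
    (M.submatrix ⇑r ⇑e)ᴴ * (S * M.submatrix ⇑r ⇑e)
      = (Mᴴ * (S.submatrix ⇑r.symm ⇑r.symm * M)).submatrix ⇑e ⇑e := by
  rw [Matrix.conjTranspose_submatrix]
  have hS : S = (S.submatrix ⇑r.symm ⇑r.symm).submatrix ⇑r ⇑r := by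
    simp [Matrix.submatrix_submatrix]
  conv_lhs => rw [hS]
  rw [Matrix.submatrix_mul_equiv (S.submatrix ⇑r.symm ⇑r.symm) M ⇑r r ⇑e,
    Matrix.submatrix_mul_equiv Mᴴ (S.submatrix ⇑r.symm ⇑r.symm * M) ⇑e r ⇑e]

lemma iso_submatrix {w k α β : Type} [Fintype w] [Fintype k] [Fintype α] [Fintype β]
    [DecidableEq k] [DecidableEq β]
    (M : Matrix α β ℂ) (r : w ≃ α) (e : k ≃ β) (h : Mᴴ * M = 1) :
    (M.submatrix ⇑r ⇑e)ᴴ * M.submatrix ⇑r ⇑e = 1 := by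
  rw [Matrix.conjTranspose_submatrix, Matrix.submatrix_mul_equiv Mᴴ M ⇑e r ⇑e, h,
    Matrix.submatrix_one_equiv]

lemma coiso_submatrix {w k α β : Type} [Fintype w] [Fintype k] [Fintype α] [Fintype β]
    [DecidableEq w] [DecidableEq α]
    (M : Matrix α β ℂ) (r : w ≃ α) (e : k ≃ β) (h : M * Mᴴ = 1) :
    M.submatrix ⇑r ⇑e * (M.submatrix ⇑r ⇑e)ᴴ = 1 := by
  rw [Matrix.conjTranspose_submatrix, Matrix.submatrix_mul_equiv M Mᴴ ⇑r e ⇑r, h,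
    Matrix.submatrix_one_equiv]

end GhzNoGo

lemma ghz4_mixed (q1 q2 q3 q4 : Fin 2)
    (h0 : ¬(q1 = 0 ∧ q2 = 0 ∧ q3 = 0 ∧ q4 = 0))
    (h1 : ¬(q1 = 1 ∧ q2 = 1 ∧ q3 = 1 ∧ q4 = 1)) :
    ghz4 q1 q2 q3 q4 = 0 := by
  simp only [ghz4]
  rw [if_neg (by tauto)]

lemma ghz4_zeros : ghz4 0 0 0 0 = (((1:ℝ) / Real.sqrt 2 : ℝ) : ℂ) := by
  simp [ghz4]

set_option maxHeartbeats 2000000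
set_option synthInstance.maxSize 8000
set_option synthInstance.maxHeartbeats 800000

/-- **A GHZ₄ state cannot be produced in the canonical four-party circuit**: if the four
source states are unit vectors, the six transformation matrices are unitary, and the four
party channels are isometries `V_X : ⊗_{T∋X} K_{T,X} → ℂ² ⊗ E_X`, then there is no unit
vector `χ ∈ E_A ⊗ E_B ⊗ E_C ⊗ E_D` with
`(V_A ⊗ V_B ⊗ V_C ⊗ V_D) U |ψ⟩ = |GHZ₄⟩ ⊗ |χ⟩` (up to the canonical reordering of
tensor factors). -/
theorem no_ghz_without_common_cause
    (ψABC : iABC_AB × iABC_AC × iABC_BC → ℂ)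
    (ψABD : iABD_AB × iABD_AD × iABD_BD → ℂ)
    (ψACD : iACD_AC × iACD_AD × iACD_CD → ℂ)
    (ψBCD : iBCD_BC × iBCD_BD × iBCD_CD → ℂ)
    (hψABC : ∑ x, ‖ψABC x‖ ^ 2 = 1) (hψABD : ∑ x, ‖ψABD x‖ ^ 2 = 1)
    (hψACD : ∑ x, ‖ψACD x‖ ^ 2 = 1) (hψBCD : ∑ x, ‖ψBCD x‖ ^ 2 = 1)
    (UAB : Matrix (kAB_A × kAB_B) (iABC_AB × iABD_AB) ℂ)
    (UAC : Matrix (kAC_A × kAC_C) (iABC_AC × iACD_AC) ℂ)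
    (UAD : Matrix (kAD_A × kAD_D) (iABD_AD × iACD_AD) ℂ)
    (UBC : Matrix (kBC_B × kBC_C) (iABC_BC × iBCD_BC) ℂ)
    (UBD : Matrix (kBD_B × kBD_D) (iABD_BD × iBCD_BD) ℂ)
    (UCD : Matrix (kCD_C × kCD_D) (iACD_CD × iBCD_CD) ℂ)
    (hUAB : UABᴴ * UAB = 1 ∧ UAB * UABᴴ = 1) (hUAC : UACᴴ * UAC = 1 ∧ UAC * UACᴴ = 1)
    (hUAD : UADᴴ * UAD = 1 ∧ UAD * UADᴴ = 1) (hUBC : UBCᴴ * UBC = 1 ∧ UBC * UBCᴴ = 1)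
    (hUBD : UBDᴴ * UBD = 1 ∧ UBD * UBDᴴ = 1) (hUCD : UCDᴴ * UCD = 1 ∧ UCD * UCDᴴ = 1)
    (VA : Matrix (Fin 2 × εA) (kAB_A × kAC_A × kAD_A) ℂ)
    (VB : Matrix (Fin 2 × εB) (kAB_B × kBC_B × kBD_B) ℂ)
    (VC : Matrix (Fin 2 × εC) (kAC_C × kBC_C × kCD_C) ℂ)
    (VD : Matrix (Fin 2 × εD) (kAD_D × kBD_D × kCD_D) ℂ)
    (hVA : VAᴴ * VA = 1) (hVB : VBᴴ * VB = 1) (hVC : VCᴴ * VC = 1) (hVD : VDᴴ * VD = 1) :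
    ¬ ∃ χ : εA × εB × εC × εD → ℂ, (∑ e, ‖χ e‖ ^ 2 = 1) ∧
        ∀ (q1 q2 q3 q4 : Fin 2) (e1 : εA) (e2 : εB) (e3 : εC) (e4 : εD),
          circuitOutput ψABC ψABD ψACD ψBCD UAB UAC UAD UBC UBD UCD VA VB VC VD
              ((q1, e1), (q2, e2), (q3, e3), (q4, e4)) =
            ghz4 q1 q2 q3 q4 * χ (e1, e2, e3, e4) := by
  letI : DecidableEq εA := Classical.decEq _
  letI : DecidableEq εB := Classical.decEq _
  letI : DecidableEq εC := Classical.decEq _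
  letI : DecidableEq εD := Classical.decEq _
  rintro ⟨χ, hχ, h⟩
  -- output components of the circuit in raw form
  have hfw0 : ∀ w : (Fin 2 × εA) × (Fin 2 × εB) × (Fin 2 × εC) × (Fin 2 × εD),
      ((Matrix.of fun (w : (Fin 2 × εA) × (Fin 2 × εB) × (Fin 2 × εC) × (Fin 2 × εD))
          (k : (kAB_A × kAB_B) × (kAC_A × kAC_C) × (kAD_A × kAD_D) ×
            (kBC_B × kBC_C) × (kBD_B × kBD_D) × (kCD_C × kCD_D)) =>
          VA w.1 (k.1.1, k.2.1.1, k.2.2.1.1) * VB w.2.1 (k.1.2, k.2.2.2.1.1, k.2.2.2.2.1.1) *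
          VC w.2.2.1 (k.2.1.2, k.2.2.2.1.2, k.2.2.2.2.2.1) *
          VD w.2.2.2 (k.2.2.1.2, k.2.2.2.2.1.2, k.2.2.2.2.2.2)) *ᵥ
        ((Matrix.of fun (k : (kAB_A × kAB_B) × (kAC_A × kAC_C) × (kAD_A × kAD_D) ×
            (kBC_B × kBC_C) × (kBD_B × kBD_D) × (kCD_C × kCD_D))
          (x : (iABC_AB × iABC_AC × iABC_BC) × (iABD_AB × iABD_AD × iABD_BD) ×
            (iACD_AC × iACD_AD × iACD_CD) × (iBCD_BC × iBCD_BD × iBCD_CD)) =>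
          UAB k.1 (x.1.1, x.2.1.1) * UAC k.2.1 (x.1.2.1, x.2.2.1.1) *
          UAD k.2.2.1 (x.2.1.2.1, x.2.2.1.2.1) * UBC k.2.2.2.1 (x.1.2.2, x.2.2.2.1) *
          UBD k.2.2.2.2.1 (x.2.1.2.2, x.2.2.2.2.1) * UCD k.2.2.2.2.2 (x.2.2.1.2.2, x.2.2.2.2.2)) *ᵥ
          (fun x => ψABC x.1 * ψABD x.2.1 * ψACD x.2.2.1 * ψBCD x.2.2.2))) w
        = ghz4 w.1.1 w.2.1.1 w.2.2.1.1 w.2.2.2.1 *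
            χ (w.1.2, w.2.1.2, w.2.2.1.2, w.2.2.2.2) :=
    fun w => h w.1.1 w.2.1.1 w.2.2.1.1 w.2.2.2.1 w.1.2 w.2.1.2 w.2.2.1.2 w.2.2.2.2
  set Ψ : (iABC_AB × iABC_AC × iABC_BC) × (iABD_AB × iABD_AD × iABD_BD) ×
      (iACD_AC × iACD_AD × iACD_CD) × (iBCD_BC × iBCD_BD × iBCD_CD) → ℂ :=
    fun x => ψABC x.1 * ψABD x.2.1 * ψACD x.2.2.1 * ψBCD x.2.2.2 with hΨ
  set Ubig : Matrix ((kAB_A × kAB_B) × (kAC_A × kAC_C) × (kAD_A × kAD_D) ×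
      (kBC_B × kBC_C) × (kBD_B × kBD_D) × (kCD_C × kCD_D))
      ((iABC_AB × iABC_AC × iABC_BC) × (iABD_AB × iABD_AD × iABD_BD) ×
      (iACD_AC × iACD_AD × iACD_CD) × (iBCD_BC × iBCD_BD × iBCD_CD)) ℂ :=
    Matrix.of fun k x =>
      UAB k.1 (x.1.1, x.2.1.1) * UAC k.2.1 (x.1.2.1, x.2.2.1.1) *
      UAD k.2.2.1 (x.2.1.2.1, x.2.2.1.2.1) * UBC k.2.2.2.1 (x.1.2.2, x.2.2.2.1) *
      UBD k.2.2.2.2.1 (x.2.1.2.2, x.2.2.2.2.1) * UCD k.2.2.2.2.2 (x.2.2.1.2.2, x.2.2.2.2.2)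
    with hUbig
  set Vbig : Matrix ((Fin 2 × εA) × (Fin 2 × εB) × (Fin 2 × εC) × (Fin 2 × εD))
      ((kAB_A × kAB_B) × (kAC_A × kAC_C) × (kAD_A × kAD_D) ×
      (kBC_B × kBC_C) × (kBD_B × kBD_D) × (kCD_C × kCD_D)) ℂ :=
    Matrix.of fun w k =>
      VA w.1 (k.1.1, k.2.1.1, k.2.2.1.1) * VB w.2.1 (k.1.2, k.2.2.2.1.1, k.2.2.2.2.1.1) *
      VC w.2.2.1 (k.2.1.2, k.2.2.2.1.2, k.2.2.2.2.2.1) *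
      VD w.2.2.2 (k.2.2.1.2, k.2.2.2.2.1.2, k.2.2.2.2.2.2)
    with hVbig
  set Φt := Ubig *ᵥ Ψ with hPhidef
  set f := Vbig *ᵥ Φt with hfdef
  have hfw : ∀ w : (Fin 2 × εA) × (Fin 2 × εB) × (Fin 2 × εC) × (Fin 2 × εD),
      f w = ghz4 w.1.1 w.2.1.1 w.2.2.1.1 w.2.2.2.1 *
        χ (w.1.2, w.2.1.2, w.2.2.1.2, w.2.2.2.2) := hfw0
  clear hfw0 h
  set g : ((Fin 2 × εA) × (Fin 2 × εB) × (Fin 2 × εC) × (Fin 2 × εD)) → ℂ :=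
    fun w => if w.1.1 = (0 : Fin 2) ∧ w.2.1.1 = (0 : Fin 2) ∧ w.2.2.1.1 = (0 : Fin 2) ∧
      w.2.2.2.1 = (0 : Fin 2) then f w else 0 with hg
  have hfzero : ∀ w : (Fin 2 × εA) × (Fin 2 × εB) × (Fin 2 × εC) × (Fin 2 × εD),
      ¬(w.1.1 = (0:Fin 2) ∧ w.2.1.1 = (0:Fin 2) ∧ w.2.2.1.1 = (0:Fin 2) ∧ w.2.2.2.1 = (0:Fin 2)) →
      ¬(w.1.1 = (1:Fin 2) ∧ w.2.1.1 = (1:Fin 2) ∧ w.2.2.1.1 = (1:Fin 2) ∧ w.2.2.2.1 = (1:Fin 2)) →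
      f w = 0 := by
    intro w h0 h1
    rw [hfw w, ghz4_mixed _ _ _ _ h0 h1, zero_mul]
  -- the equivalence regrouping transformation-indexed legs by parties
  set eV : (((kAB_A × kAB_B) × (kAC_A × kAC_C) × (kAD_A × kAD_D) ×
      (kBC_B × kBC_C) × (kBD_B × kBD_D) × (kCD_C × kCD_D)) ≃
      ((kAB_A × kAC_A × kAD_A) × (kAB_B × kBC_B × kBD_B) ×
       (kAC_C × kBC_C × kCD_C) × (kAD_D × kBD_D × kCD_D))) :=
    ⟨fun k => ((k.1.1, k.2.1.1, k.2.2.1.1), (k.1.2, k.2.2.2.1.1, k.2.2.2.2.1.1),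
        (k.2.1.2, k.2.2.2.1.2, k.2.2.2.2.2.1), (k.2.2.1.2, k.2.2.2.2.1.2, k.2.2.2.2.2.2)),
     fun g => ((g.1.1, g.2.1.1), (g.1.2.1, g.2.2.1.1), (g.1.2.2, g.2.2.2.1),
        (g.2.1.2.1, g.2.2.1.2.1), (g.2.1.2.2, g.2.2.2.2.1), (g.2.2.1.2.2, g.2.2.2.2.2)),
     fun _ => rfl, fun _ => rfl⟩ with heV
  have hVrep : Vbig = (GhzNoGo.kron VA (GhzNoGo.kron VB (GhzNoGo.kron VC VD))).submatrix
      ⇑(Equiv.refl ((Fin 2 × εA) × (Fin 2 × εB) × (Fin 2 × εC) × (Fin 2 × εD))) ⇑eV := by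
    ext w k
    simp only [hVbig, Matrix.of_apply, Matrix.submatrix_apply, GhzNoGo.kron_apply, heV,
      Equiv.coe_fn_mk, Equiv.coe_refl, id_eq]
    ring
  -- projector actions on the output vector
  have hDA0f : (GhzNoGo.kron (Matrix.diagonal (fun p : Fin 2 × εA => if p.1 = (0 : Fin 2) then (1:ℂ) else 0)) (GhzNoGo.kron (Matrix.diagonal (fun _ : Fin 2 × εB => (1:ℂ))) (GhzNoGo.kron (Matrix.diagonal (fun _ : Fin 2 × εC => (1:ℂ))) (Matrix.diagonal (fun _ : Fin 2 × εD => (1:ℂ)))))) *ᵥ f = g := by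
    funext w
    rw [GhzNoGo.kron4_diag_mulVec]
    simp only [mul_one, one_mul]
    by_cases hall : (w.1.1 = (0:Fin 2) ∧ w.2.1.1 = (0:Fin 2) ∧ w.2.2.1.1 = (0:Fin 2) ∧
        w.2.2.2.1 = (0:Fin 2))
    · rw [if_pos hall.1, one_mul]
      simp only [hg]
      rw [if_pos hall]
    · simp only [hg]
      rw [if_neg hall]
      by_cases h1 : w.1.1 = (0 : Fin 2)
      · rw [if_pos h1, one_mul]
        refine hfzero w hall ?_
        rintro ⟨ha, -⟩
        rw [h1] at ha
        exact absurd ha (by decide)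
      · rw [if_neg h1, zero_mul]
  have hDB0f : (GhzNoGo.kron (Matrix.diagonal (fun _ : Fin 2 × εA => (1:ℂ))) (GhzNoGo.kron (Matrix.diagonal (fun p : Fin 2 × εB => if p.1 = (0 : Fin 2) then (1:ℂ) else 0)) (GhzNoGo.kron (Matrix.diagonal (fun _ : Fin 2 × εC => (1:ℂ))) (Matrix.diagonal (fun _ : Fin 2 × εD => (1:ℂ)))))) *ᵥ f = g := by
    funext w
    rw [GhzNoGo.kron4_diag_mulVec]
    simp only [mul_one, one_mul]
    by_cases hall : (w.1.1 = (0:Fin 2) ∧ w.2.1.1 = (0:Fin 2) ∧ w.2.2.1.1 = (0:Fin 2) ∧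
        w.2.2.2.1 = (0:Fin 2))
    · rw [if_pos hall.2.1, one_mul]
      simp only [hg]
      rw [if_pos hall]
    · simp only [hg]
      rw [if_neg hall]
      by_cases h1 : w.2.1.1 = (0 : Fin 2)
      · rw [if_pos h1, one_mul]
        refine hfzero w hall ?_
        rintro ⟨-, ha, -⟩
        rw [h1] at ha
        exact absurd ha (by decide)
      · rw [if_neg h1, zero_mul]
  have hDC0f : (GhzNoGo.kron (Matrix.diagonal (fun _ : Fin 2 × εA => (1:ℂ))) (GhzNoGo.kron (Matrix.diagonal (fun _ : Fin 2 × εB => (1:ℂ))) (GhzNoGo.kron (Matrix.diagonal (fun p : Fin 2 × εC => if p.1 = (0 : Fin 2) then (1:ℂ) else 0)) (Matrix.diagonal (fun _ : Fin 2 × εD => (1:ℂ)))))) *ᵥ f = g := by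
    funext w
    rw [GhzNoGo.kron4_diag_mulVec]
    simp only [mul_one, one_mul]
    by_cases hall : (w.1.1 = (0:Fin 2) ∧ w.2.1.1 = (0:Fin 2) ∧ w.2.2.1.1 = (0:Fin 2) ∧
        w.2.2.2.1 = (0:Fin 2))
    · rw [if_pos hall.2.2.1, one_mul]
      simp only [hg]
      rw [if_pos hall]
    · simp only [hg]
      rw [if_neg hall]
      by_cases h1 : w.2.2.1.1 = (0 : Fin 2)
      · rw [if_pos h1, one_mul]
        refine hfzero w hall ?_
        rintro ⟨-, -, ha, -⟩
        rw [h1] at ha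
        exact absurd ha (by decide)
      · rw [if_neg h1, zero_mul]
  have hDD0f : (GhzNoGo.kron (Matrix.diagonal (fun _ : Fin 2 × εA => (1:ℂ))) (GhzNoGo.kron (Matrix.diagonal (fun _ : Fin 2 × εB => (1:ℂ))) (GhzNoGo.kron (Matrix.diagonal (fun _ : Fin 2 × εC => (1:ℂ))) (Matrix.diagonal (fun p : Fin 2 × εD => if p.1 = (0 : Fin 2) then (1:ℂ) else 0))))) *ᵥ f = g := by
    funext w
    rw [GhzNoGo.kron4_diag_mulVec]
    simp only [mul_one, one_mul]
    by_cases hall : (w.1.1 = (0:Fin 2) ∧ w.2.1.1 = (0:Fin 2) ∧ w.2.2.1.1 = (0:Fin 2) ∧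
        w.2.2.2.1 = (0:Fin 2))
    · rw [if_pos hall.2.2.2, one_mul]
      simp only [hg]
      rw [if_pos hall]
    · simp only [hg]
      rw [if_neg hall]
      by_cases h1 : w.2.2.2.1 = (0 : Fin 2)
      · rw [if_pos h1, one_mul]
        refine hfzero w hall ?_
        rintro ⟨-, -, -, ha⟩
        rw [h1] at ha
        exact absurd ha (by decide)
      · rw [if_neg h1, zero_mul]
  have hDD1f : (GhzNoGo.kron (Matrix.diagonal (fun _ : Fin 2 × εA => (1:ℂ))) (GhzNoGo.kron (Matrix.diagonal (fun _ : Fin 2 × εB => (1:ℂ))) (GhzNoGo.kron (Matrix.diagonal (fun _ : Fin 2 × εC => (1:ℂ))) (Matrix.diagonal (fun p : Fin 2 × εD => if p.1 = (1 : Fin 2) then (1:ℂ) else 0))))) *ᵥ f = f - g := by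
    funext w
    rw [GhzNoGo.kron4_diag_mulVec]
    simp only [mul_one, one_mul, Pi.sub_apply]
    by_cases h1 : w.2.2.2.1 = (1 : Fin 2)
    · rw [if_pos h1, one_mul]
      have hgw : g w = 0 := by
        simp only [hg]
        rw [if_neg]
        rintro ⟨-, -, -, ha⟩
        rw [h1] at ha
        exact absurd ha (by decide)
      rw [hgw, sub_zero]
    · rw [if_neg h1, zero_mul]
      by_cases hall : (w.1.1 = (0:Fin 2) ∧ w.2.1.1 = (0:Fin 2) ∧ w.2.2.1.1 = (0:Fin 2) ∧
          w.2.2.2.1 = (0:Fin 2))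
      · have hgw : g w = f w := by simp only [hg]; rw [if_pos hall]
        rw [hgw, sub_self]
      · have hgw : g w = 0 := by simp only [hg]; rw [if_neg hall]
        have hfz : f w = 0 := by
          refine hfzero w hall ?_
          rintro ⟨-, -, -, ha⟩
          exact h1 ha
        rw [hgw, hfz, sub_zero]
  have hDADf : (GhzNoGo.kron (Matrix.diagonal (fun p : Fin 2 × εA => if p.1 = (0 : Fin 2) then (1:ℂ) else 0)) (GhzNoGo.kron (Matrix.diagonal (fun _ : Fin 2 × εB => (1:ℂ))) (GhzNoGo.kron (Matrix.diagonal (fun _ : Fin 2 × εC => (1:ℂ))) (Matrix.diagonal (fun p : Fin 2 × εD => if p.1 = (1 : Fin 2) then (1:ℂ) else 0))))) *ᵥ f = 0 := by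
    funext w
    rw [GhzNoGo.kron4_diag_mulVec]
    simp only [mul_one, one_mul, Pi.zero_apply]
    by_cases h1 : w.1.1 = (0 : Fin 2)
    · by_cases h4 : w.2.2.2.1 = (1 : Fin 2)
      · rw [if_pos h1, if_pos h4, one_mul, one_mul]
        refine hfzero w ?_ ?_
        · rintro ⟨-, -, -, ha⟩
          rw [h4] at ha
          exact absurd ha (by decide)
        · rintro ⟨ha, -⟩
          rw [h1] at ha
          exact absurd ha (by decide)
      · rw [if_neg h4]
        ring
    · rw [if_neg h1]
      ring
  set v := Vbigᴴ *ᵥ g with hvdef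
  set u := Ubigᴴ *ᵥ v with hudef

  -- ===== party A =====
  set rA : (((kAB_A × kAB_B) × (kAC_A × kAC_C) × (kAD_A × kAD_D) ×
      (kBC_B × kBC_C) × (kBD_B × kBD_D) × (kCD_C × kCD_D)) ≃ ((kAB_A × kAB_B) × (kAC_A × kAC_C) × (kAD_A × kAD_D)) × ((kBC_B × kBC_C) × (kBD_B × kBD_D) × (kCD_C × kCD_D))) :=
    ⟨fun k => ((k.1, k.2.1, k.2.2.1), (k.2.2.2.1, k.2.2.2.2.1, k.2.2.2.2.2)), fun y => (y.1.1, y.1.2.1, y.1.2.2, y.2.1, y.2.2.1, y.2.2.2), fun _ => rfl, fun _ => rfl⟩ with hrA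
  set eA : (((iABC_AB × iABC_AC × iABC_BC) × (iABD_AB × iABD_AD × iABD_BD) ×
      (iACD_AC × iACD_AD × iACD_CD) × (iBCD_BC × iBCD_BD × iBCD_CD)) ≃ ((iABC_AB × iABD_AB) × (iABC_AC × iACD_AC) × (iABD_AD × iACD_AD)) × ((iABC_BC × iBCD_BC) × (iABD_BD × iBCD_BD) × (iACD_CD × iBCD_CD))) :=
    ⟨fun x => (((x.1.1, x.2.1.1), (x.1.2.1, x.2.2.1.1), (x.2.1.2.1, x.2.2.1.2.1)), ((x.1.2.2, x.2.2.2.1), (x.2.1.2.2, x.2.2.2.2.1), (x.2.2.1.2.2, x.2.2.2.2.2))), fun z => ((z.1.1.1, z.1.2.1.1, z.2.1.1), (z.1.1.2, z.1.2.2.1, z.2.2.1.1), (z.1.2.1.2, z.1.2.2.2, z.2.2.2.1), (z.2.1.2, z.2.2.1.2, z.2.2.2.2)), fun _ => rfl, fun _ => rfl⟩ with heA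
  have hUrepA : Ubig = (GhzNoGo.kron (GhzNoGo.kron UAB (GhzNoGo.kron UAC UAD)) (GhzNoGo.kron UBC (GhzNoGo.kron UBD UCD))).submatrix ⇑rA ⇑eA := by
    ext k x
    simp only [hUbig, Matrix.of_apply, Matrix.submatrix_apply, GhzNoGo.kron_apply, hrA, heA,
      Equiv.coe_fn_mk]
    ring
  have hSandA : (GhzNoGo.kron VA (GhzNoGo.kron VB (GhzNoGo.kron VC VD)))ᴴ * ((GhzNoGo.kron (Matrix.diagonal (fun p : Fin 2 × εA => if p.1 = (0 : Fin 2) then (1:ℂ) else 0)) (GhzNoGo.kron (Matrix.diagonal (fun _ : Fin 2 × εB => (1:ℂ))) (GhzNoGo.kron (Matrix.diagonal (fun _ : Fin 2 × εC => (1:ℂ))) (Matrix.diagonal (fun _ : Fin 2 × εD => (1:ℂ)))))) * (GhzNoGo.kron VA (GhzNoGo.kron VB (GhzNoGo.kron VC VD))))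
      = GhzNoGo.kron (VAᴴ * (Matrix.diagonal (fun p : Fin 2 × εA => if p.1 = (0 : Fin 2) then (1:ℂ) else 0) * VA)) (GhzNoGo.kron (1 : Matrix (kAB_B × kBC_B × kBD_B) (kAB_B × kBC_B × kBD_B) ℂ) (GhzNoGo.kron (1 : Matrix (kAC_C × kBC_C × kCD_C) (kAC_C × kBC_C × kCD_C) ℂ) (1 : Matrix (kAD_D × kBD_D × kCD_D) (kAD_D × kBD_D × kCD_D) ℂ))) := by
    rw [GhzNoGo.kron_conj_mul, GhzNoGo.kron_conj_mul, GhzNoGo.kron_conj_mul,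
      Matrix.diagonal_one, Matrix.diagonal_one, Matrix.diagonal_one,
      Matrix.one_mul, Matrix.one_mul, Matrix.one_mul, hVB, hVC, hVD]
  have hNpartyA : Vbigᴴ * ((GhzNoGo.kron (Matrix.diagonal (fun p : Fin 2 × εA => if p.1 = (0 : Fin 2) then (1:ℂ) else 0)) (GhzNoGo.kron (Matrix.diagonal (fun _ : Fin 2 × εB => (1:ℂ))) (GhzNoGo.kron (Matrix.diagonal (fun _ : Fin 2 × εC => (1:ℂ))) (Matrix.diagonal (fun _ : Fin 2 × εD => (1:ℂ)))))) * Vbig)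
      = (GhzNoGo.kron (VAᴴ * (Matrix.diagonal (fun p : Fin 2 × εA => if p.1 = (0 : Fin 2) then (1:ℂ) else 0) * VA)) (GhzNoGo.kron (1 : Matrix (kAB_B × kBC_B × kBD_B) (kAB_B × kBC_B × kBD_B) ℂ) (GhzNoGo.kron (1 : Matrix (kAC_C × kBC_C × kCD_C) (kAC_C × kBC_C × kCD_C) ℂ) (1 : Matrix (kAD_D × kBD_D × kCD_D) (kAD_D × kBD_D × kCD_D) ℂ)))).submatrix ⇑eV ⇑eV := by
    rw [hVrep, GhzNoGo.conj_submatrix2]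
    simp only [Equiv.symm_symm, Equiv.refl_symm, Equiv.coe_refl, Matrix.submatrix_id_id]
    rw [hSandA]
  have hNtransA : Vbigᴴ * ((GhzNoGo.kron (Matrix.diagonal (fun p : Fin 2 × εA => if p.1 = (0 : Fin 2) then (1:ℂ) else 0)) (GhzNoGo.kron (Matrix.diagonal (fun _ : Fin 2 × εB => (1:ℂ))) (GhzNoGo.kron (Matrix.diagonal (fun _ : Fin 2 × εC => (1:ℂ))) (Matrix.diagonal (fun _ : Fin 2 × εD => (1:ℂ)))))) * Vbig)
      = (GhzNoGo.kron (Matrix.of fun (y y' : ((kAB_A × kAB_B) × (kAC_A × kAC_C) × (kAD_A × kAD_D))) => (VAᴴ * (Matrix.diagonal (fun p : Fin 2 × εA => if p.1 = (0 : Fin 2) then (1:ℂ) else 0) * VA)) (y.1.1, y.2.1.1, y.2.2.1) (y'.1.1, y'.2.1.1, y'.2.2.1) * ((if y.1.2 = y'.1.2 then (1:ℂ) else 0) * ((if y.2.1.2 = y'.2.1.2 then (1:ℂ) else 0) * (if y.2.2.2 = y'.2.2.2 then (1:ℂ) else 0)))) (1 : Matrix ((kBC_B × kBC_C) × (kBD_B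 × kBD_D) × (kCD_C × kCD_D)) ((kBC_B × kBC_C) × (kBD_B × kBD_D) × (kCD_C × kCD_D)) ℂ)).submatrix ⇑rA ⇑rA := by
    rw [hNpartyA]
    ext k k'
    simp only [Matrix.submatrix_apply, GhzNoGo.kron_apply, Matrix.one_apply, Matrix.of_apply,
      heV, hrA, Equiv.coe_fn_mk, Prod.mk.injEq, Prod.ext_iff, GhzNoGo.ite_and_one]
    ring
  have hRA : Ubigᴴ * ((Vbigᴴ * ((GhzNoGo.kron (Matrix.diagonal (fun p : Fin 2 × εA => if p.1 = (0 : Fin 2) then (1:ℂ) else 0)) (GhzNoGo.kron (Matrix.diagonal (fun _ : Fin 2 × εB => (1:ℂ))) (GhzNoGo.kron (Matrix.diagonal (fun _ : Fin 2 × εC => (1:ℂ))) (Matrix.diagonal (fun _ : Fin 2 × εD => (1:ℂ)))))) * Vbig)) * Ubig)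
      = (GhzNoGo.kron ((GhzNoGo.kron UAB (GhzNoGo.kron UAC UAD))ᴴ * ((Matrix.of fun (y y' : ((kAB_A × kAB_B) × (kAC_A × kAC_C) × (kAD_A × kAD_D))) => (VAᴴ * (Matrix.diagonal (fun p : Fin 2 × εA => if p.1 = (0 : Fin 2) then (1:ℂ) else 0) * VA)) (y.1.1, y.2.1.1, y.2.2.1) (y'.1.1, y'.2.1.1, y'.2.2.1) * ((if y.1.2 = y'.1.2 then (1:ℂ) else 0) * ((if y.2.1.2 = y'.2.1.2 then (1:ℂ) else 0) * (if y.2.2.2 = y'.2.2.2 then (1:ℂ) else 0)))) * (GhzNoGo.kron UAB (GhzNoGo.kron UAC UAD))))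
          (1 : Matrix ((iABC_BC × iBCD_BC) × (iABD_BD × iBCD_BD) × (iACD_CD × iBCD_CD)) ((iABC_BC × iBCD_BC) × (iABD_BD × iBCD_BD) × (iACD_CD × iBCD_CD)) ℂ)).submatrix ⇑eA ⇑eA := by
    rw [hNtransA, hUrepA, GhzNoGo.conj_submatrix2]
    rw [show ((GhzNoGo.kron (Matrix.of fun (y y' : ((kAB_A × kAB_B) × (kAC_A × kAC_C) × (kAD_A × kAD_D))) => (VAᴴ * (Matrix.diagonal (fun p : Fin 2 × εA => if p.1 = (0 : Fin 2) then (1:ℂ) else 0) * VA)) (y.1.1, y.2.1.1, y.2.2.1) (y'.1.1, y'.2.1.1, y'.2.2.1) * ((if y.1.2 = y'.1.2 then (1:ℂ) else 0) * ((if y.2.1.2 = y'.2.1.2 then (1:ℂ) else 0) * (if y.2.2.2 = y'.2.2.2 then (1:ℂ) else 0)))) (1 : Matrix ((kBC_B × kBC_C) × (kBD_B × kBD_D) × (kCD_C × kCD_D)) ((kBC_B × kBC_C) × (kBD_B × kBD_D) × (kCD_C × kCD_D)) ℂ)).submatrix ⇑rA ⇑rA).submatrix ⇑rA.symm ⇑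rA.symm
        = GhzNoGo.kron (Matrix.of fun (y y' : ((kAB_A × kAB_B) × (kAC_A × kAC_C) × (kAD_A × kAD_D))) => (VAᴴ * (Matrix.diagonal (fun p : Fin 2 × εA => if p.1 = (0 : Fin 2) then (1:ℂ) else 0) * VA)) (y.1.1, y.2.1.1, y.2.2.1) (y'.1.1, y'.2.1.1, y'.2.2.1) * ((if y.1.2 = y'.1.2 then (1:ℂ) else 0) * ((if y.2.1.2 = y'.2.1.2 then (1:ℂ) else 0) * (if y.2.2.2 = y'.2.2.2 then (1:ℂ) else 0)))) (1 : Matrix ((kBC_B × kBC_C) × (kBD_B × kBD_D) × (kCD_C × kCD_D)) ((kBC_B × kBC_C) × (kBD_B × kBD_D) × (kCD_C × kCD_D)) ℂ) by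
      simp [Matrix.submatrix_submatrix, Equiv.self_comp_symm, Matrix.submatrix_id_id]]
    rw [GhzNoGo.kron_conj_mul, Matrix.one_mul, GhzNoGo.kron_iso _ _ hUBC.1 (GhzNoGo.kron_iso _ _ hUBD.1 hUCD.1)]
  have hNPhiA : (Vbigᴴ * ((GhzNoGo.kron (Matrix.diagonal (fun p : Fin 2 × εA => if p.1 = (0 : Fin 2) then (1:ℂ) else 0)) (GhzNoGo.kron (Matrix.diagonal (fun _ : Fin 2 × εB => (1:ℂ))) (GhzNoGo.kron (Matrix.diagonal (fun _ : Fin 2 × εC => (1:ℂ))) (Matrix.diagonal (fun _ : Fin 2 × εD => (1:ℂ)))))) * Vbig)) *ᵥ Φt = v := by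
    rw [← Matrix.mulVec_mulVec, ← Matrix.mulVec_mulVec, ← hfdef, hDA0f, hvdef]
  have huRA : u = ((GhzNoGo.kron ((GhzNoGo.kron UAB (GhzNoGo.kron UAC UAD))ᴴ * ((Matrix.of fun (y y' : ((kAB_A × kAB_B) × (kAC_A × kAC_C) × (kAD_A × kAD_D))) => (VAᴴ * (Matrix.diagonal (fun p : Fin 2 × εA => if p.1 = (0 : Fin 2) then (1:ℂ) else 0) * VA)) (y.1.1, y.2.1.1, y.2.2.1) (y'.1.1, y'.2.1.1, y'.2.2.1) * ((if y.1.2 = y'.1.2 then (1:ℂ) else 0) * ((if y.2.1.2 = y'.2.1.2 then (1:ℂ) else 0) * (if y.2.2.2 = y'.2.2.2 then (1:ℂ) else 0)))) * (GhzNoGo.kron UAB (GhzNoGo.kron UAC UAD))))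
      (1 : Matrix ((iABC_BC × iBCD_BC) × (iABD_BD × iBCD_BD) × (iACD_CD × iBCD_CD)) ((iABC_BC × iBCD_BC) × (iABD_BD × iBCD_BD) × (iACD_CD × iBCD_CD)) ℂ)).submatrix ⇑eA ⇑eA) *ᵥ Ψ := by
    rw [hudef, ← hNPhiA, hPhidef, Matrix.mulVec_mulVec, Matrix.mulVec_mulVec,
      Matrix.mul_assoc, hRA]
  set aA : ((iABC_AB × iABC_AC × iABC_BC) × (iABD_AB × iABD_AD × iABD_BD) × (iACD_AC × iACD_AD × iACD_CD)) → ℂ :=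
    fun t => ∑ z : (iABC_AB × iABD_AB) × (iABC_AC × iACD_AC) × (iABD_AD × iACD_AD),
      ((GhzNoGo.kron UAB (GhzNoGo.kron UAC UAD))ᴴ * ((Matrix.of fun (y y' : ((kAB_A × kAB_B) × (kAC_A × kAC_C) × (kAD_A × kAD_D))) => (VAᴴ * (Matrix.diagonal (fun p : Fin 2 × εA => if p.1 = (0 : Fin 2) then (1:ℂ) else 0) * VA)) (y.1.1, y.2.1.1, y.2.2.1) (y'.1.1, y'.2.1.1, y'.2.2.1) * ((if y.1.2 = y'.1.2 then (1:ℂ) else 0) * ((if y.2.1.2 = y'.2.1.2 then (1:ℂ) else 0) * (if y.2.2.2 = y'.2.2.2 then (1:ℂ) else 0)))) * (GhzNoGo.kron UAB (GhzNoGo.kron UAC UAD)))) ((t.1.1, t.2.1.1), (t.1.2.1, t.2.2.1), (t.2.1.2.1, t.2.2.2.1)) z * (ψABC (z.1.1, z.2.1.1, t.1.2.2) * ψABD (z.1.2, z.2.2.1, t.2.1.2.2) * ψACD (z.2.1.2, z.2.2.2, t.2.2.2.2)) with haA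
  have hlocA : ∀ x, u x = aA (x.1, x.2.1, x.2.2.1) * ψBCD x.2.2.2 := by
    intro x
    rw [huRA, Matrix.submatrix_mulVec_equiv]
    simp only [Function.comp_apply]
    have h2 : (GhzNoGo.kron ((GhzNoGo.kron UAB (GhzNoGo.kron UAC UAD))ᴴ * ((Matrix.of fun (y y' : ((kAB_A × kAB_B) × (kAC_A × kAC_C) × (kAD_A × kAD_D))) => (VAᴴ * (Matrix.diagonal (fun p : Fin 2 × εA => if p.1 = (0 : Fin 2) then (1:ℂ) else 0) * VA)) (y.1.1, y.2.1.1, y.2.2.1) (y'.1.1, y'.2.1.1, y'.2.2.1) * ((if y.1.2 = y'.1.2 then (1:ℂ) else 0) * ((if y.2.1.2 = y'.2.1.2 then (1:ℂ) else 0) * (if y.2.2.2 = y'.2.2.2 then (1:ℂ) else 0)))) * (GhzNoGo.kron UAB (GhzNoGo.kron UAC UAD))))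
        (1 : Matrix ((iABC_BC × iBCD_BC) × (iABD_BD × iBCD_BD) × (iACD_CD × iBCD_CD)) ((iABC_BC × iBCD_BC) × (iABD_BD × iBCD_BD) × (iACD_CD × iBCD_CD)) ℂ) *ᵥ (Ψ ∘ ⇑eA.symm)) (⇑eA x)
        = ∑ z : (iABC_AB × iABD_AB) × (iABC_AC × iACD_AC) × (iABD_AD × iACD_AD), ((GhzNoGo.kron UAB (GhzNoGo.kron UAC UAD))ᴴ * ((Matrix.of fun (y y' : ((kAB_A × kAB_B) × (kAC_A × kAC_C) × (kAD_A × kAD_D))) => (VAᴴ * (Matrix.diagonal (fun p : Fin 2 × εA => if p.1 = (0 : Fin 2) then (1:ℂ) else 0) * VA)) (y.1.1, y.2.1.1, y.2.2.1) (y'.1.1, y'.2.1.1, y'.2.2.1) * ((if y.1.2 = y'.1.2 then (1:ℂ) else 0) * ((if y.2.1.2 = y'.2.1.2 then (1:ℂ) else 0) * (if y.2.2.2 = y'.2.2.2 then (1:ℂ) else 0)))) * (GhzNoGo.kron UAB (GhzNoGo.kron UAC UAD)))) (⇑eA x).1 z *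
            (Ψ ∘ ⇑eA.symm) (z, (⇑eA x).2) :=
      GhzNoGo.kron_one_mulVec _ _ _ _
    rw [h2]
    simp only [haA]
    rw [Finset.sum_mul]
    apply Finset.sum_congr rfl
    intro z _
    simp only [heA, hΨ, Equiv.coe_fn_mk, Equiv.coe_fn_symm_mk, Function.comp_apply,
      Prod.mk.eta]
    ring

  -- ===== party B =====
  set rB : (((kAB_A × kAB_B) × (kAC_A × kAC_C) × (kAD_A × kAD_D) ×
      (kBC_B × kBC_C) × (kBD_B × kBD_D) × (kCD_C × kCD_D)) ≃ ((kAB_A × kAB_B) × (kBC_B × kBC_C) × (kBD_B × kBD_D)) × ((kAC_A × kAC_C) × (kAD_A × kAD_D) × (kCD_C × kCD_D))) :=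
    ⟨fun k => ((k.1, k.2.2.2.1, k.2.2.2.2.1), (k.2.1, k.2.2.1, k.2.2.2.2.2)), fun y => (y.1.1, y.2.1, y.2.2.1, y.1.2.1, y.1.2.2, y.2.2.2), fun _ => rfl, fun _ => rfl⟩ with hrB
  set eB : (((iABC_AB × iABC_AC × iABC_BC) × (iABD_AB × iABD_AD × iABD_BD) ×
      (iACD_AC × iACD_AD × iACD_CD) × (iBCD_BC × iBCD_BD × iBCD_CD)) ≃ ((iABC_AB × iABD_AB) × (iABC_BC × iBCD_BC) × (iABD_BD × iBCD_BD)) × ((iABC_AC × iACD_AC) × (iABD_AD × iACD_AD) × (iACD_CD × iBCD_CD))) :=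
    ⟨fun x => (((x.1.1, x.2.1.1), (x.1.2.2, x.2.2.2.1), (x.2.1.2.2, x.2.2.2.2.1)), ((x.1.2.1, x.2.2.1.1), (x.2.1.2.1, x.2.2.1.2.1), (x.2.2.1.2.2, x.2.2.2.2.2))), fun z => ((z.1.1.1, z.2.1.1, z.1.2.1.1), (z.1.1.2, z.2.2.1.1, z.1.2.2.1), (z.2.1.2, z.2.2.1.2, z.2.2.2.1), (z.1.2.1.2, z.1.2.2.2, z.2.2.2.2)), fun _ => rfl, fun _ => rfl⟩ with heB
  have hUrepB : Ubig = (GhzNoGo.kron (GhzNoGo.kron UAB (GhzNoGo.kron UBC UBD)) (GhzNoGo.kron UAC (GhzNoGo.kron UAD UCD))).submatrix ⇑rB ⇑eB := by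
    ext k x
    simp only [hUbig, Matrix.of_apply, Matrix.submatrix_apply, GhzNoGo.kron_apply, hrB, heB,
      Equiv.coe_fn_mk]
    ring
  have hSandB : (GhzNoGo.kron VA (GhzNoGo.kron VB (GhzNoGo.kron VC VD)))ᴴ * ((GhzNoGo.kron (Matrix.diagonal (fun _ : Fin 2 × εA => (1:ℂ))) (GhzNoGo.kron (Matrix.diagonal (fun p : Fin 2 × εB => if p.1 = (0 : Fin 2) then (1:ℂ) else 0)) (GhzNoGo.kron (Matrix.diagonal (fun _ : Fin 2 × εC => (1:ℂ))) (Matrix.diagonal (fun _ : Fin 2 × εD => (1:ℂ)))))) * (GhzNoGo.kron VA (GhzNoGo.kron VB (GhzNoGo.kron VC VD))))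
      = GhzNoGo.kron (1 : Matrix (kAB_A × kAC_A × kAD_A) (kAB_A × kAC_A × kAD_A) ℂ) (GhzNoGo.kron (VBᴴ * (Matrix.diagonal (fun p : Fin 2 × εB => if p.1 = (0 : Fin 2) then (1:ℂ) else 0) * VB)) (GhzNoGo.kron (1 : Matrix (kAC_C × kBC_C × kCD_C) (kAC_C × kBC_C × kCD_C) ℂ) (1 : Matrix (kAD_D × kBD_D × kCD_D) (kAD_D × kBD_D × kCD_D) ℂ))) := by
    rw [GhzNoGo.kron_conj_mul, GhzNoGo.kron_conj_mul, GhzNoGo.kron_conj_mul,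
      Matrix.diagonal_one, Matrix.diagonal_one, Matrix.diagonal_one,
      Matrix.one_mul, Matrix.one_mul, Matrix.one_mul, hVA, hVC, hVD]
  have hNpartyB : Vbigᴴ * ((GhzNoGo.kron (Matrix.diagonal (fun _ : Fin 2 × εA => (1:ℂ))) (GhzNoGo.kron (Matrix.diagonal (fun p : Fin 2 × εB => if p.1 = (0 : Fin 2) then (1:ℂ) else 0)) (GhzNoGo.kron (Matrix.diagonal (fun _ : Fin 2 × εC => (1:ℂ))) (Matrix.diagonal (fun _ : Fin 2 × εD => (1:ℂ)))))) * Vbig)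
      = (GhzNoGo.kron (1 : Matrix (kAB_A × kAC_A × kAD_A) (kAB_A × kAC_A × kAD_A) ℂ) (GhzNoGo.kron (VBᴴ * (Matrix.diagonal (fun p : Fin 2 × εB => if p.1 = (0 : Fin 2) then (1:ℂ) else 0) * VB)) (GhzNoGo.kron (1 : Matrix (kAC_C × kBC_C × kCD_C) (kAC_C × kBC_C × kCD_C) ℂ) (1 : Matrix (kAD_D × kBD_D × kCD_D) (kAD_D × kBD_D × kCD_D) ℂ)))).submatrix ⇑eV ⇑eV := by
    rw [hVrep, GhzNoGo.conj_submatrix2]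
    simp only [Equiv.symm_symm, Equiv.refl_symm, Equiv.coe_refl, Matrix.submatrix_id_id]
    rw [hSandB]
  have hNtransB : Vbigᴴ * ((GhzNoGo.kron (Matrix.diagonal (fun _ : Fin 2 × εA => (1:ℂ))) (GhzNoGo.kron (Matrix.diagonal (fun p : Fin 2 × εB => if p.1 = (0 : Fin 2) then (1:ℂ) else 0)) (GhzNoGo.kron (Matrix.diagonal (fun _ : Fin 2 × εC => (1:ℂ))) (Matrix.diagonal (fun _ : Fin 2 × εD => (1:ℂ)))))) * Vbig)
      = (GhzNoGo.kron (Matrix.of fun (y y' : ((kAB_A × kAB_B) × (kBC_B × kBC_C) × (kBD_B × kBD_D))) => (VBᴴ * (Matrix.diagonal (fun p : Fin 2 × εB => if p.1 = (0 : Fin 2) then (1:ℂ) else 0) * VB)) (y.1.2, y.2.1.1, y.2.2.1) (y'.1.2, y'.2.1.1, y'.2.2.1) * ((if y.1.1 = y'.1.1 then (1:ℂ) else 0) * ((if y.2.1.2 = y'.2.1.2 then (1:ℂ) else 0) * (if y.2.2.2 = y'.2.2.2 then (1:ℂ) else 0)))) (1 : Matrix ((kAC_A × kAC_C) × (kAD_A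 × kAD_D) × (kCD_C × kCD_D)) ((kAC_A × kAC_C) × (kAD_A × kAD_D) × (kCD_C × kCD_D)) ℂ)).submatrix ⇑rB ⇑rB := by
    rw [hNpartyB]
    ext k k'
    simp only [Matrix.submatrix_apply, GhzNoGo.kron_apply, Matrix.one_apply, Matrix.of_apply,
      heV, hrB, Equiv.coe_fn_mk, Prod.mk.injEq, Prod.ext_iff, GhzNoGo.ite_and_one]
    ring
  have hRB : Ubigᴴ * ((Vbigᴴ * ((GhzNoGo.kron (Matrix.diagonal (fun _ : Fin 2 × εA => (1:ℂ))) (GhzNoGo.kron (Matrix.diagonal (fun p : Fin 2 × εB => if p.1 = (0 : Fin 2) then (1:ℂ) else 0)) (GhzNoGo.kron (Matrix.diagonal (fun _ : Fin 2 × εC => (1:ℂ))) (Matrix.diagonal (fun _ : Fin 2 × εD => (1:ℂ)))))) * Vbig)) * Ubig)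
      = (GhzNoGo.kron ((GhzNoGo.kron UAB (GhzNoGo.kron UBC UBD))ᴴ * ((Matrix.of fun (y y' : ((kAB_A × kAB_B) × (kBC_B × kBC_C) × (kBD_B × kBD_D))) => (VBᴴ * (Matrix.diagonal (fun p : Fin 2 × εB => if p.1 = (0 : Fin 2) then (1:ℂ) else 0) * VB)) (y.1.2, y.2.1.1, y.2.2.1) (y'.1.2, y'.2.1.1, y'.2.2.1) * ((if y.1.1 = y'.1.1 then (1:ℂ) else 0) * ((if y.2.1.2 = y'.2.1.2 then (1:ℂ) else 0) * (if y.2.2.2 = y'.2.2.2 then (1:ℂ) else 0)))) * (GhzNoGo.kron UAB (GhzNoGo.kron UBC UBD))))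
          (1 : Matrix ((iABC_AC × iACD_AC) × (iABD_AD × iACD_AD) × (iACD_CD × iBCD_CD)) ((iABC_AC × iACD_AC) × (iABD_AD × iACD_AD) × (iACD_CD × iBCD_CD)) ℂ)).submatrix ⇑eB ⇑eB := by
    rw [hNtransB, hUrepB, GhzNoGo.conj_submatrix2]
    rw [show ((GhzNoGo.kron (Matrix.of fun (y y' : ((kAB_A × kAB_B) × (kBC_B × kBC_C) × (kBD_B × kBD_D))) => (VBᴴ * (Matrix.diagonal (fun p : Fin 2 × εB => if p.1 = (0 : Fin 2) then (1:ℂ) else 0) * VB)) (y.1.2, y.2.1.1, y.2.2.1) (y'.1.2, y'.2.1.1, y'.2.2.1) * ((if y.1.1 = y'.1.1 then (1:ℂ) else 0) * ((if y.2.1.2 = y'.2.1.2 then (1:ℂ) else 0) * (if y.2.2.2 = y'.2.2.2 then (1:ℂ) else 0)))) (1 : Matrix ((kAC_A × kAC_C) × (kAD_A × kAD_D) × (kCD_C × kCD_D)) ((kAC_A × kAC_C) × (kAD_A × kAD_D) × (kCD_C × kCD_D)) ℂ)).submatrix ⇑rB ⇑rB).submatrix ⇑rB.symm ⇑rB.s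ymm
        = GhzNoGo.kron (Matrix.of fun (y y' : ((kAB_A × kAB_B) × (kBC_B × kBC_C) × (kBD_B × kBD_D))) => (VBᴴ * (Matrix.diagonal (fun p : Fin 2 × εB => if p.1 = (0 : Fin 2) then (1:ℂ) else 0) * VB)) (y.1.2, y.2.1.1, y.2.2.1) (y'.1.2, y'.2.1.1, y'.2.2.1) * ((if y.1.1 = y'.1.1 then (1:ℂ) else 0) * ((if y.2.1.2 = y'.2.1.2 then (1:ℂ) else 0) * (if y.2.2.2 = y'.2.2.2 then (1:ℂ) else 0)))) (1 : Matrix ((kAC_A × kAC_C) × (kAD_A × kAD_D) × (kCD_C × kCD_D)) ((kAC_A × kAC_C) × (kAD_A × kAD_D) × (kCD_C × kCD_D)) ℂ) by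
      simp [Matrix.submatrix_submatrix, Equiv.self_comp_symm, Matrix.submatrix_id_id]]
    rw [GhzNoGo.kron_conj_mul, Matrix.one_mul, GhzNoGo.kron_iso _ _ hUAC.1 (GhzNoGo.kron_iso _ _ hUAD.1 hUCD.1)]
  have hNPhiB : (Vbigᴴ * ((GhzNoGo.kron (Matrix.diagonal (fun _ : Fin 2 × εA => (1:ℂ))) (GhzNoGo.kron (Matrix.diagonal (fun p : Fin 2 × εB => if p.1 = (0 : Fin 2) then (1:ℂ) else 0)) (GhzNoGo.kron (Matrix.diagonal (fun _ : Fin 2 × εC => (1:ℂ))) (Matrix.diagonal (fun _ : Fin 2 × εD => (1:ℂ)))))) * Vbig)) *ᵥ Φt = v := by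
    rw [← Matrix.mulVec_mulVec, ← Matrix.mulVec_mulVec, ← hfdef, hDB0f, hvdef]
  have huRB : u = ((GhzNoGo.kron ((GhzNoGo.kron UAB (GhzNoGo.kron UBC UBD))ᴴ * ((Matrix.of fun (y y' : ((kAB_A × kAB_B) × (kBC_B × kBC_C) × (kBD_B × kBD_D))) => (VBᴴ * (Matrix.diagonal (fun p : Fin 2 × εB => if p.1 = (0 : Fin 2) then (1:ℂ) else 0) * VB)) (y.1.2, y.2.1.1, y.2.2.1) (y'.1.2, y'.2.1.1, y'.2.2.1) * ((if y.1.1 = y'.1.1 then (1:ℂ) else 0) * ((if y.2.1.2 = y'.2.1.2 then (1:ℂ) else 0) * (if y.2.2.2 = y'.2.2.2 then (1:ℂ) else 0)))) * (GhzNoGo.kron UAB (GhzNoGo.kron UBC UBD))))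
      (1 : Matrix ((iABC_AC × iACD_AC) × (iABD_AD × iACD_AD) × (iACD_CD × iBCD_CD)) ((iABC_AC × iACD_AC) × (iABD_AD × iACD_AD) × (iACD_CD × iBCD_CD)) ℂ)).submatrix ⇑eB ⇑eB) *ᵥ Ψ := by
    rw [hudef, ← hNPhiB, hPhidef, Matrix.mulVec_mulVec, Matrix.mulVec_mulVec,
      Matrix.mul_assoc, hRB]
  set aB : ((iABC_AB × iABC_AC × iABC_BC) × (iABD_AB × iABD_AD × iABD_BD) × (iBCD_BC × iBCD_BD × iBCD_CD)) → ℂ :=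
    fun t => ∑ z : (iABC_AB × iABD_AB) × (iABC_BC × iBCD_BC) × (iABD_BD × iBCD_BD),
      ((GhzNoGo.kron UAB (GhzNoGo.kron UBC UBD))ᴴ * ((Matrix.of fun (y y' : ((kAB_A × kAB_B) × (kBC_B × kBC_C) × (kBD_B × kBD_D))) => (VBᴴ * (Matrix.diagonal (fun p : Fin 2 × εB => if p.1 = (0 : Fin 2) then (1:ℂ) else 0) * VB)) (y.1.2, y.2.1.1, y.2.2.1) (y'.1.2, y'.2.1.1, y'.2.2.1) * ((if y.1.1 = y'.1.1 then (1:ℂ) else 0) * ((if y.2.1.2 = y'.2.1.2 then (1:ℂ) else 0) * (if y.2.2.2 = y'.2.2.2 then (1:ℂ) else 0)))) * (GhzNoGo.kron UAB (GhzNoGo.kron UBC UBD)))) ((t.1.1, t.2.1.1), (t.1.2.2, t.2.2.1), (t.2.1.2.2, t.2.2.2.1)) z * (ψABC (z.1.1, t.1.2.1, z.2.1.1) * ψABD (z.1.2, t.2.1.2.1, z.2.2.1) * ψBCD (z.2.1.2, z.2.2.2, t.2.2.2.2)) with haB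
  have hlocB : ∀ x, u x = aB (x.1, x.2.1, x.2.2.2) * ψACD x.2.2.1 := by
    intro x
    rw [huRB, Matrix.submatrix_mulVec_equiv]
    simp only [Function.comp_apply]
    have h2 : (GhzNoGo.kron ((GhzNoGo.kron UAB (GhzNoGo.kron UBC UBD))ᴴ * ((Matrix.of fun (y y' : ((kAB_A × kAB_B) × (kBC_B × kBC_C) × (kBD_B × kBD_D))) => (VBᴴ * (Matrix.diagonal (fun p : Fin 2 × εB => if p.1 = (0 : Fin 2) then (1:ℂ) else 0) * VB)) (y.1.2, y.2.1.1, y.2.2.1) (y'.1.2, y'.2.1.1, y'.2.2.1) * ((if y.1.1 = y'.1.1 then (1:ℂ) else 0) * ((if y.2.1.2 = y'.2.1.2 then (1:ℂ) else 0) * (if y.2.2.2 = y'.2.2.2 then (1:ℂ) else 0)))) * (GhzNoGo.kron UAB (GhzNoGo.kron UBC UBD))))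
        (1 : Matrix ((iABC_AC × iACD_AC) × (iABD_AD × iACD_AD) × (iACD_CD × iBCD_CD)) ((iABC_AC × iACD_AC) × (iABD_AD × iACD_AD) × (iACD_CD × iBCD_CD)) ℂ) *ᵥ (Ψ ∘ ⇑eB.symm)) (⇑eB x)
        = ∑ z : (iABC_AB × iABD_AB) × (iABC_BC × iBCD_BC) × (iABD_BD × iBCD_BD), ((GhzNoGo.kron UAB (GhzNoGo.kron UBC UBD))ᴴ * ((Matrix.of fun (y y' : ((kAB_A × kAB_B) × (kBC_B × kBC_C) × (kBD_B × kBD_D))) => (VBᴴ * (Matrix.diagonal (fun p : Fin 2 × εB => if p.1 = (0 : Fin 2) then (1:ℂ) else 0) * VB)) (y.1.2, y.2.1.1, y.2.2.1) (y'.1.2, y'.2.1.1, y'.2.2.1) * ((if y.1.1 = y'.1.1 then (1:ℂ) else 0) * ((if y.2.1.2 = y'.2.1.2 then (1:ℂ) else 0) * (if y.2.2.2 = y'.2.2.2 then (1:ℂ) else 0)))) * (GhzNoGo.kron UAB (GhzNoGo.kron UBC UBD)))) (⇑eB x).1 z *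
            (Ψ ∘ ⇑eB.symm) (z, (⇑eB x).2) :=
      GhzNoGo.kron_one_mulVec _ _ _ _
    rw [h2]
    simp only [haB]
    rw [Finset.sum_mul]
    apply Finset.sum_congr rfl
    intro z _
    simp only [heB, hΨ, Equiv.coe_fn_mk, Equiv.coe_fn_symm_mk, Function.comp_apply,
      Prod.mk.eta]
    ring

  -- ===== party C =====
  set rC : (((kAB_A × kAB_B) × (kAC_A × kAC_C) × (kAD_A × kAD_D) ×
      (kBC_B × kBC_C) × (kBD_B × kBD_D) × (kCD_C × kCD_D)) ≃ ((kAC_A × kAC_C) × (kBC_B × kBC_C) × (kCD_C × kCD_D)) × ((kAB_A × kAB_B) × (kAD_A × kAD_D) × (kBD_B × kBD_D))) :=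
    ⟨fun k => ((k.2.1, k.2.2.2.1, k.2.2.2.2.2), (k.1, k.2.2.1, k.2.2.2.2.1)), fun y => (y.2.1, y.1.1, y.2.2.1, y.1.2.1, y.2.2.2, y.1.2.2), fun _ => rfl, fun _ => rfl⟩ with hrC
  set eC : (((iABC_AB × iABC_AC × iABC_BC) × (iABD_AB × iABD_AD × iABD_BD) ×
      (iACD_AC × iACD_AD × iACD_CD) × (iBCD_BC × iBCD_BD × iBCD_CD)) ≃ ((iABC_AC × iACD_AC) × (iABC_BC × iBCD_BC) × (iACD_CD × iBCD_CD)) × ((iABC_AB × iABD_AB) × (iABD_AD × iACD_AD) × (iABD_BD × iBCD_BD))) :=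
    ⟨fun x => (((x.1.2.1, x.2.2.1.1), (x.1.2.2, x.2.2.2.1), (x.2.2.1.2.2, x.2.2.2.2.2)), ((x.1.1, x.2.1.1), (x.2.1.2.1, x.2.2.1.2.1), (x.2.1.2.2, x.2.2.2.2.1))), fun z => ((z.2.1.1, z.1.1.1, z.1.2.1.1), (z.2.1.2, z.2.2.1.1, z.2.2.2.1), (z.1.1.2, z.2.2.1.2, z.1.2.2.1), (z.1.2.1.2, z.2.2.2.2, z.1.2.2.2)), fun _ => rfl, fun _ => rfl⟩ with heC
  have hUrepC : Ubig = (GhzNoGo.kron (GhzNoGo.kron UAC (GhzNoGo.kron UBC UCD)) (GhzNoGo.kron UAB (GhzNoGo.kron UAD UBD))).submatrix ⇑rC ⇑eC := by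
    ext k x
    simp only [hUbig, Matrix.of_apply, Matrix.submatrix_apply, GhzNoGo.kron_apply, hrC, heC,
      Equiv.coe_fn_mk]
    ring
  have hSandC : (GhzNoGo.kron VA (GhzNoGo.kron VB (GhzNoGo.kron VC VD)))ᴴ * ((GhzNoGo.kron (Matrix.diagonal (fun _ : Fin 2 × εA => (1:ℂ))) (GhzNoGo.kron (Matrix.diagonal (fun _ : Fin 2 × εB => (1:ℂ))) (GhzNoGo.kron (Matrix.diagonal (fun p : Fin 2 × εC => if p.1 = (0 : Fin 2) then (1:ℂ) else 0)) (Matrix.diagonal (fun _ : Fin 2 × εD => (1:ℂ)))))) * (GhzNoGo.kron VA (GhzNoGo.kron VB (GhzNoGo.kron VC VD))))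
      = GhzNoGo.kron (1 : Matrix (kAB_A × kAC_A × kAD_A) (kAB_A × kAC_A × kAD_A) ℂ) (GhzNoGo.kron (1 : Matrix (kAB_B × kBC_B × kBD_B) (kAB_B × kBC_B × kBD_B) ℂ) (GhzNoGo.kron (VCᴴ * (Matrix.diagonal (fun p : Fin 2 × εC => if p.1 = (0 : Fin 2) then (1:ℂ) else 0) * VC)) (1 : Matrix (kAD_D × kBD_D × kCD_D) (kAD_D × kBD_D × kCD_D) ℂ))) := by
    rw [GhzNoGo.kron_conj_mul, GhzNoGo.kron_conj_mul, GhzNoGo.kron_conj_mul,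
      Matrix.diagonal_one, Matrix.diagonal_one, Matrix.diagonal_one,
      Matrix.one_mul, Matrix.one_mul, Matrix.one_mul, hVA, hVB, hVD]
  have hNpartyC : Vbigᴴ * ((GhzNoGo.kron (Matrix.diagonal (fun _ : Fin 2 × εA => (1:ℂ))) (GhzNoGo.kron (Matrix.diagonal (fun _ : Fin 2 × εB => (1:ℂ))) (GhzNoGo.kron (Matrix.diagonal (fun p : Fin 2 × εC => if p.1 = (0 : Fin 2) then (1:ℂ) else 0)) (Matrix.diagonal (fun _ : Fin 2 × εD => (1:ℂ)))))) * Vbig)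
      = (GhzNoGo.kron (1 : Matrix (kAB_A × kAC_A × kAD_A) (kAB_A × kAC_A × kAD_A) ℂ) (GhzNoGo.kron (1 : Matrix (kAB_B × kBC_B × kBD_B) (kAB_B × kBC_B × kBD_B) ℂ) (GhzNoGo.kron (VCᴴ * (Matrix.diagonal (fun p : Fin 2 × εC => if p.1 = (0 : Fin 2) then (1:ℂ) else 0) * VC)) (1 : Matrix (kAD_D × kBD_D × kCD_D) (kAD_D × kBD_D × kCD_D) ℂ)))).submatrix ⇑eV ⇑eV := by
    rw [hVrep, GhzNoGo.conj_submatrix2]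
    simp only [Equiv.symm_symm, Equiv.refl_symm, Equiv.coe_refl, Matrix.submatrix_id_id]
    rw [hSandC]
  have hNtransC : Vbigᴴ * ((GhzNoGo.kron (Matrix.diagonal (fun _ : Fin 2 × εA => (1:ℂ))) (GhzNoGo.kron (Matrix.diagonal (fun _ : Fin 2 × εB => (1:ℂ))) (GhzNoGo.kron (Matrix.diagonal (fun p : Fin 2 × εC => if p.1 = (0 : Fin 2) then (1:ℂ) else 0)) (Matrix.diagonal (fun _ : Fin 2 × εD => (1:ℂ)))))) * Vbig)
      = (GhzNoGo.kron (Matrix.of fun (y y' : ((kAC_A × kAC_C) × (kBC_B × kBC_C) × (kCD_C × kCD_D))) => (VCᴴ * (Matrix.diagonal (fun p : Fin 2 × εC => if p.1 = (0 : Fin 2) then (1:ℂ) else 0) * VC)) (y.1.2, y.2.1.2, y.2.2.1) (y'.1.2, y'.2.1.2, y'.2.2.1) * ((if y.1.1 = y'.1.1 then (1:ℂ) else 0) * ((if y.2.1.1 = y'.2.1.1 then (1:ℂ) else 0) * (if y.2.2.2 = y'.2.2.2 then (1:ℂ) else 0)))) (1 : Matrix ((kAB_A × kAB_B) × (kAD_A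 × kAD_D) × (kBD_B × kBD_D)) ((kAB_A × kAB_B) × (kAD_A × kAD_D) × (kBD_B × kBD_D)) ℂ)).submatrix ⇑rC ⇑rC := by
    rw [hNpartyC]
    ext k k'
    simp only [Matrix.submatrix_apply, GhzNoGo.kron_apply, Matrix.one_apply, Matrix.of_apply,
      heV, hrC, Equiv.coe_fn_mk, Prod.mk.injEq, Prod.ext_iff, GhzNoGo.ite_and_one]
    ring
  have hRC : Ubigᴴ * ((Vbigᴴ * ((GhzNoGo.kron (Matrix.diagonal (fun _ : Fin 2 × εA => (1:ℂ))) (GhzNoGo.kron (Matrix.diagonal (fun _ : Fin 2 × εB => (1:ℂ))) (GhzNoGo.kron (Matrix.diagonal (fun p : Fin 2 × εC => if p.1 = (0 : Fin 2) then (1:ℂ) else 0)) (Matrix.diagonal (fun _ : Fin 2 × εD => (1:ℂ)))))) * Vbig)) * Ubig)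
      = (GhzNoGo.kron ((GhzNoGo.kron UAC (GhzNoGo.kron UBC UCD))ᴴ * ((Matrix.of fun (y y' : ((kAC_A × kAC_C) × (kBC_B × kBC_C) × (kCD_C × kCD_D))) => (VCᴴ * (Matrix.diagonal (fun p : Fin 2 × εC => if p.1 = (0 : Fin 2) then (1:ℂ) else 0) * VC)) (y.1.2, y.2.1.2, y.2.2.1) (y'.1.2, y'.2.1.2, y'.2.2.1) * ((if y.1.1 = y'.1.1 then (1:ℂ) else 0) * ((if y.2.1.1 = y'.2.1.1 then (1:ℂ) else 0) * (if y.2.2.2 = y'.2.2.2 then (1:ℂ) else 0)))) * (GhzNoGo.kron UAC (GhzNoGo.kron UBC UCD))))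
          (1 : Matrix ((iABC_AB × iABD_AB) × (iABD_AD × iACD_AD) × (iABD_BD × iBCD_BD)) ((iABC_AB × iABD_AB) × (iABD_AD × iACD_AD) × (iABD_BD × iBCD_BD)) ℂ)).submatrix ⇑eC ⇑eC := by
    rw [hNtransC, hUrepC, GhzNoGo.conj_submatrix2]
    rw [show ((GhzNoGo.kron (Matrix.of fun (y y' : ((kAC_A × kAC_C) × (kBC_B × kBC_C) × (kCD_C × kCD_D))) => (VCᴴ * (Matrix.diagonal (fun p : Fin 2 × εC => if p.1 = (0 : Fin 2) then (1:ℂ) else 0) * VC)) (y.1.2, y.2.1.2, y.2.2.1) (y'.1.2, y'.2.1.2, y'.2.2.1) * ((if y.1.1 = y'.1.1 then (1:ℂ) else 0) * ((if y.2.1.1 = y'.2.1.1 then (1:ℂ) else 0) * (if y.2.2.2 = y'.2.2.2 then (1:ℂ) else 0)))) (1 : Matrix ((kAB_A × kAB_B) × (kAD_A × kAD_D) × (kBD_B × kBD_D)) ((kAB_A × kAB_B) × (kAD_A × kAD_D) × (kBD_B × kBD_D)) ℂ)).submatrix ⇑rC ⇑rC).submatrix ⇑rC.symm ⇑rC.s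ymm
        = GhzNoGo.kron (Matrix.of fun (y y' : ((kAC_A × kAC_C) × (kBC_B × kBC_C) × (kCD_C × kCD_D))) => (VCᴴ * (Matrix.diagonal (fun p : Fin 2 × εC => if p.1 = (0 : Fin 2) then (1:ℂ) else 0) * VC)) (y.1.2, y.2.1.2, y.2.2.1) (y'.1.2, y'.2.1.2, y'.2.2.1) * ((if y.1.1 = y'.1.1 then (1:ℂ) else 0) * ((if y.2.1.1 = y'.2.1.1 then (1:ℂ) else 0) * (if y.2.2.2 = y'.2.2.2 then (1:ℂ) else 0)))) (1 : Matrix ((kAB_A × kAB_B) × (kAD_A × kAD_D) × (kBD_B × kBD_D)) ((kAB_A × kAB_B) × (kAD_A × kAD_D) × (kBD_B × kBD_D)) ℂ) by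
      simp [Matrix.submatrix_submatrix, Equiv.self_comp_symm, Matrix.submatrix_id_id]]
    rw [GhzNoGo.kron_conj_mul, Matrix.one_mul, GhzNoGo.kron_iso _ _ hUAB.1 (GhzNoGo.kron_iso _ _ hUAD.1 hUBD.1)]
  have hNPhiC : (Vbigᴴ * ((GhzNoGo.kron (Matrix.diagonal (fun _ : Fin 2 × εA => (1:ℂ))) (GhzNoGo.kron (Matrix.diagonal (fun _ : Fin 2 × εB => (1:ℂ))) (GhzNoGo.kron (Matrix.diagonal (fun p : Fin 2 × εC => if p.1 = (0 : Fin 2) then (1:ℂ) else 0)) (Matrix.diagonal (fun _ : Fin 2 × εD => (1:ℂ)))))) * Vbig)) *ᵥ Φt = v := by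
    rw [← Matrix.mulVec_mulVec, ← Matrix.mulVec_mulVec, ← hfdef, hDC0f, hvdef]
  have huRC : u = ((GhzNoGo.kron ((GhzNoGo.kron UAC (GhzNoGo.kron UBC UCD))ᴴ * ((Matrix.of fun (y y' : ((kAC_A × kAC_C) × (kBC_B × kBC_C) × (kCD_C × kCD_D))) => (VCᴴ * (Matrix.diagonal (fun p : Fin 2 × εC => if p.1 = (0 : Fin 2) then (1:ℂ) else 0) * VC)) (y.1.2, y.2.1.2, y.2.2.1) (y'.1.2, y'.2.1.2, y'.2.2.1) * ((if y.1.1 = y'.1.1 then (1:ℂ) else 0) * ((if y.2.1.1 = y'.2.1.1 then (1:ℂ) else 0) * (if y.2.2.2 = y'.2.2.2 then (1:ℂ) else 0)))) * (GhzNoGo.kron UAC (GhzNoGo.kron UBC UCD))))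
      (1 : Matrix ((iABC_AB × iABD_AB) × (iABD_AD × iACD_AD) × (iABD_BD × iBCD_BD)) ((iABC_AB × iABD_AB) × (iABD_AD × iACD_AD) × (iABD_BD × iBCD_BD)) ℂ)).submatrix ⇑eC ⇑eC) *ᵥ Ψ := by
    rw [hudef, ← hNPhiC, hPhidef, Matrix.mulVec_mulVec, Matrix.mulVec_mulVec,
      Matrix.mul_assoc, hRC]
  set aC : ((iABC_AB × iABC_AC × iABC_BC) × (iACD_AC × iACD_AD × iACD_CD) × (iBCD_BC × iBCD_BD × iBCD_CD)) → ℂ :=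
    fun t => ∑ z : (iABC_AC × iACD_AC) × (iABC_BC × iBCD_BC) × (iACD_CD × iBCD_CD),
      ((GhzNoGo.kron UAC (GhzNoGo.kron UBC UCD))ᴴ * ((Matrix.of fun (y y' : ((kAC_A × kAC_C) × (kBC_B × kBC_C) × (kCD_C × kCD_D))) => (VCᴴ * (Matrix.diagonal (fun p : Fin 2 × εC => if p.1 = (0 : Fin 2) then (1:ℂ) else 0) * VC)) (y.1.2, y.2.1.2, y.2.2.1) (y'.1.2, y'.2.1.2, y'.2.2.1) * ((if y.1.1 = y'.1.1 then (1:ℂ) else 0) * ((if y.2.1.1 = y'.2.1.1 then (1:ℂ) else 0) * (if y.2.2.2 = y'.2.2.2 then (1:ℂ) else 0)))) * (GhzNoGo.kron UAC (GhzNoGo.kron UBC UCD)))) ((t.1.2.1, t.2.1.1), (t.1.2.2, t.2.2.1), (t.2.1.2.2, t.2.2.2.2)) z * (ψABC (t.1.1, z.1.1, z.2.1.1) * ψACD (z.1.2, t.2.1.2.1, z.2.2.1) * ψBCD (z.2.1.2, t.2.2.2.1, z.2.2.2)) with haC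
  have hlocC : ∀ x, u x = aC (x.1, x.2.2.1, x.2.2.2) * ψABD x.2.1 := by
    intro x
    rw [huRC, Matrix.submatrix_mulVec_equiv]
    simp only [Function.comp_apply]
    have h2 : (GhzNoGo.kron ((GhzNoGo.kron UAC (GhzNoGo.kron UBC UCD))ᴴ * ((Matrix.of fun (y y' : ((kAC_A × kAC_C) × (kBC_B × kBC_C) × (kCD_C × kCD_D))) => (VCᴴ * (Matrix.diagonal (fun p : Fin 2 × εC => if p.1 = (0 : Fin 2) then (1:ℂ) else 0) * VC)) (y.1.2, y.2.1.2, y.2.2.1) (y'.1.2, y'.2.1.2, y'.2.2.1) * ((if y.1.1 = y'.1.1 then (1:ℂ) else 0) * ((if y.2.1.1 = y'.2.1.1 then (1:ℂ) else 0) * (if y.2.2.2 = y'.2.2.2 then (1:ℂ) else 0)))) * (GhzNoGo.kron UAC (GhzNoGo.kron UBC UCD))))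
        (1 : Matrix ((iABC_AB × iABD_AB) × (iABD_AD × iACD_AD) × (iABD_BD × iBCD_BD)) ((iABC_AB × iABD_AB) × (iABD_AD × iACD_AD) × (iABD_BD × iBCD_BD)) ℂ) *ᵥ (Ψ ∘ ⇑eC.symm)) (⇑eC x)
        = ∑ z : (iABC_AC × iACD_AC) × (iABC_BC × iBCD_BC) × (iACD_CD × iBCD_CD), ((GhzNoGo.kron UAC (GhzNoGo.kron UBC UCD))ᴴ * ((Matrix.of fun (y y' : ((kAC_A × kAC_C) × (kBC_B × kBC_C) × (kCD_C × kCD_D))) => (VCᴴ * (Matrix.diagonal (fun p : Fin 2 × εC => if p.1 = (0 : Fin 2) then (1:ℂ) else 0) * VC)) (y.1.2, y.2.1.2, y.2.2.1) (y'.1.2, y'.2.1.2, y'.2.2.1) * ((if y.1.1 = y'.1.1 then (1:ℂ) else 0) * ((if y.2.1.1 = y'.2.1.1 then (1:ℂ) else 0) * (if y.2.2.2 = y'.2.2.2 then (1:ℂ) else 0)))) * (GhzNoGo.kron UAC (GhzNoGo.kron UBC UCD)))) (⇑eC x).1 z *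
            (Ψ ∘ ⇑eC.symm) (z, (⇑eC x).2) :=
      GhzNoGo.kron_one_mulVec _ _ _ _
    rw [h2]
    simp only [haC]
    rw [Finset.sum_mul]
    apply Finset.sum_congr rfl
    intro z _
    simp only [heC, hΨ, Equiv.coe_fn_mk, Equiv.coe_fn_symm_mk, Function.comp_apply,
      Prod.mk.eta]
    ring

  -- ===== party D =====
  set rD : (((kAB_A × kAB_B) × (kAC_A × kAC_C) × (kAD_A × kAD_D) ×
      (kBC_B × kBC_C) × (kBD_B × kBD_D) × (kCD_C × kCD_D)) ≃ ((kAD_A × kAD_D) × (kBD_B × kBD_D) × (kCD_C × kCD_D)) × ((kAB_A × kAB_B) × (kAC_A × kAC_C) × (kBC_B × kBC_C))) :=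
    ⟨fun k => ((k.2.2.1, k.2.2.2.2.1, k.2.2.2.2.2), (k.1, k.2.1, k.2.2.2.1)), fun y => (y.2.1, y.2.2.1, y.1.1, y.2.2.2, y.1.2.1, y.1.2.2), fun _ => rfl, fun _ => rfl⟩ with hrD
  set eD : (((iABC_AB × iABC_AC × iABC_BC) × (iABD_AB × iABD_AD × iABD_BD) ×
      (iACD_AC × iACD_AD × iACD_CD) × (iBCD_BC × iBCD_BD × iBCD_CD)) ≃ ((iABD_AD × iACD_AD) × (iABD_BD × iBCD_BD) × (iACD_CD × iBCD_CD)) × ((iABC_AB × iABD_AB) × (iABC_AC × iACD_AC) × (iABC_BC × iBCD_BC))) :=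
    ⟨fun x => (((x.2.1.2.1, x.2.2.1.2.1), (x.2.1.2.2, x.2.2.2.2.1), (x.2.2.1.2.2, x.2.2.2.2.2)), ((x.1.1, x.2.1.1), (x.1.2.1, x.2.2.1.1), (x.1.2.2, x.2.2.2.1))), fun z => ((z.2.1.1, z.2.2.1.1, z.2.2.2.1), (z.2.1.2, z.1.1.1, z.1.2.1.1), (z.2.2.1.2, z.1.1.2, z.1.2.2.1), (z.2.2.2.2, z.1.2.1.2, z.1.2.2.2)), fun _ => rfl, fun _ => rfl⟩ with heD
  have hUrepD : Ubig = (GhzNoGo.kron (GhzNoGo.kron UAD (GhzNoGo.kron UBD UCD)) (GhzNoGo.kron UAB (GhzNoGo.kron UAC UBC))).submatrix ⇑rD ⇑eD := by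
    ext k x
    simp only [hUbig, Matrix.of_apply, Matrix.submatrix_apply, GhzNoGo.kron_apply, hrD, heD,
      Equiv.coe_fn_mk]
    ring
  have hSandD : (GhzNoGo.kron VA (GhzNoGo.kron VB (GhzNoGo.kron VC VD)))ᴴ * ((GhzNoGo.kron (Matrix.diagonal (fun _ : Fin 2 × εA => (1:ℂ))) (GhzNoGo.kron (Matrix.diagonal (fun _ : Fin 2 × εB => (1:ℂ))) (GhzNoGo.kron (Matrix.diagonal (fun _ : Fin 2 × εC => (1:ℂ))) (Matrix.diagonal (fun p : Fin 2 × εD => if p.1 = (0 : Fin 2) then (1:ℂ) else 0))))) * (GhzNoGo.kron VA (GhzNoGo.kron VB (GhzNoGo.kron VC VD))))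
      = GhzNoGo.kron (1 : Matrix (kAB_A × kAC_A × kAD_A) (kAB_A × kAC_A × kAD_A) ℂ) (GhzNoGo.kron (1 : Matrix (kAB_B × kBC_B × kBD_B) (kAB_B × kBC_B × kBD_B) ℂ) (GhzNoGo.kron (1 : Matrix (kAC_C × kBC_C × kCD_C) (kAC_C × kBC_C × kCD_C) ℂ) (VDᴴ * (Matrix.diagonal (fun p : Fin 2 × εD => if p.1 = (0 : Fin 2) then (1:ℂ) else 0) * VD)))) := by
    rw [GhzNoGo.kron_conj_mul, GhzNoGo.kron_conj_mul, GhzNoGo.kron_conj_mul,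
      Matrix.diagonal_one, Matrix.diagonal_one, Matrix.diagonal_one,
      Matrix.one_mul, Matrix.one_mul, Matrix.one_mul, hVA, hVB, hVC]
  have hNpartyD : Vbigᴴ * ((GhzNoGo.kron (Matrix.diagonal (fun _ : Fin 2 × εA => (1:ℂ))) (GhzNoGo.kron (Matrix.diagonal (fun _ : Fin 2 × εB => (1:ℂ))) (GhzNoGo.kron (Matrix.diagonal (fun _ : Fin 2 × εC => (1:ℂ))) (Matrix.diagonal (fun p : Fin 2 × εD => if p.1 = (0 : Fin 2) then (1:ℂ) else 0))))) * Vbig)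
      = (GhzNoGo.kron (1 : Matrix (kAB_A × kAC_A × kAD_A) (kAB_A × kAC_A × kAD_A) ℂ) (GhzNoGo.kron (1 : Matrix (kAB_B × kBC_B × kBD_B) (kAB_B × kBC_B × kBD_B) ℂ) (GhzNoGo.kron (1 : Matrix (kAC_C × kBC_C × kCD_C) (kAC_C × kBC_C × kCD_C) ℂ) (VDᴴ * (Matrix.diagonal (fun p : Fin 2 × εD => if p.1 = (0 : Fin 2) then (1:ℂ) else 0) * VD))))).submatrix ⇑eV ⇑eV := by
    rw [hVrep, GhzNoGo.conj_submatrix2]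
    simp only [Equiv.symm_symm, Equiv.refl_symm, Equiv.coe_refl, Matrix.submatrix_id_id]
    rw [hSandD]
  have hNtransD : Vbigᴴ * ((GhzNoGo.kron (Matrix.diagonal (fun _ : Fin 2 × εA => (1:ℂ))) (GhzNoGo.kron (Matrix.diagonal (fun _ : Fin 2 × εB => (1:ℂ))) (GhzNoGo.kron (Matrix.diagonal (fun _ : Fin 2 × εC => (1:ℂ))) (Matrix.diagonal (fun p : Fin 2 × εD => if p.1 = (0 : Fin 2) then (1:ℂ) else 0))))) * Vbig)
      = (GhzNoGo.kron (Matrix.of fun (y y' : ((kAD_A × kAD_D) × (kBD_B × kBD_D) × (kCD_C × kCD_D))) => (VDᴴ * (Matrix.diagonal (fun p : Fin 2 × εD => if p.1 = (0 : Fin 2) then (1:ℂ) else 0) * VD)) (y.1.2, y.2.1.2, y.2.2.2) (y'.1.2, y'.2.1.2, y'.2.2.2) * ((if y.1.1 = y'.1.1 then (1:ℂ) else 0) * ((if y.2.1.1 = y'.2.1.1 then (1:ℂ) else 0) * (if y.2.2.1 = y'.2.2.1 then (1:ℂ) else 0)))) (1 : Matrix ((kAB_A × kAB_B) × (kAC_A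 × kAC_C) × (kBC_B × kBC_C)) ((kAB_A × kAB_B) × (kAC_A × kAC_C) × (kBC_B × kBC_C)) ℂ)).submatrix ⇑rD ⇑rD := by
    rw [hNpartyD]
    ext k k'
    simp only [Matrix.submatrix_apply, GhzNoGo.kron_apply, Matrix.one_apply, Matrix.of_apply,
      heV, hrD, Equiv.coe_fn_mk, Prod.mk.injEq, Prod.ext_iff, GhzNoGo.ite_and_one]
    ring
  have hRD : Ubigᴴ * ((Vbigᴴ * ((GhzNoGo.kron (Matrix.diagonal (fun _ : Fin 2 × εA => (1:ℂ))) (GhzNoGo.kron (Matrix.diagonal (fun _ : Fin 2 × εB => (1:ℂ))) (GhzNoGo.kron (Matrix.diagonal (fun _ : Fin 2 × εC => (1:ℂ))) (Matrix.diagonal (fun p : Fin 2 × εD => if p.1 = (0 : Fin 2) then (1:ℂ) else 0))))) * Vbig)) * Ubig)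
      = (GhzNoGo.kron ((GhzNoGo.kron UAD (GhzNoGo.kron UBD UCD))ᴴ * ((Matrix.of fun (y y' : ((kAD_A × kAD_D) × (kBD_B × kBD_D) × (kCD_C × kCD_D))) => (VDᴴ * (Matrix.diagonal (fun p : Fin 2 × εD => if p.1 = (0 : Fin 2) then (1:ℂ) else 0) * VD)) (y.1.2, y.2.1.2, y.2.2.2) (y'.1.2, y'.2.1.2, y'.2.2.2) * ((if y.1.1 = y'.1.1 then (1:ℂ) else 0) * ((if y.2.1.1 = y'.2.1.1 then (1:ℂ) else 0) * (if y.2.2.1 = y'.2.2.1 then (1:ℂ) else 0)))) * (GhzNoGo.kron UAD (GhzNoGo.kron UBD UCD))))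
          (1 : Matrix ((iABC_AB × iABD_AB) × (iABC_AC × iACD_AC) × (iABC_BC × iBCD_BC)) ((iABC_AB × iABD_AB) × (iABC_AC × iACD_AC) × (iABC_BC × iBCD_BC)) ℂ)).submatrix ⇑eD ⇑eD := by
    rw [hNtransD, hUrepD, GhzNoGo.conj_submatrix2]
    rw [show ((GhzNoGo.kron (Matrix.of fun (y y' : ((kAD_A × kAD_D) × (kBD_B × kBD_D) × (kCD_C × kCD_D))) => (VDᴴ * (Matrix.diagonal (fun p : Fin 2 × εD => if p.1 = (0 : Fin 2) then (1:ℂ) else 0) * VD)) (y.1.2, y.2.1.2, y.2.2.2) (y'.1.2, y'.2.1.2, y'.2.2.2) * ((if y.1.1 = y'.1.1 then (1:ℂ) else 0) * ((if y.2.1.1 = y'.2.1.1 then (1:ℂ) else 0) * (if y.2.2.1 = y'.2.2.1 then (1:ℂ) else 0)))) (1 : Matrix ((kAB_A × kAB_B) × (kAC_A × kAC_C) × (kBC_B × kBC_C)) ((kAB_A × kAB_B) × (kAC_A × kAC_C) × (kBC_B × kBC_C)) ℂ)).submatrix ⇑rD ⇑rD).submatrix ⇑rD.symm ⇑rD.s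ymm
        = GhzNoGo.kron (Matrix.of fun (y y' : ((kAD_A × kAD_D) × (kBD_B × kBD_D) × (kCD_C × kCD_D))) => (VDᴴ * (Matrix.diagonal (fun p : Fin 2 × εD => if p.1 = (0 : Fin 2) then (1:ℂ) else 0) * VD)) (y.1.2, y.2.1.2, y.2.2.2) (y'.1.2, y'.2.1.2, y'.2.2.2) * ((if y.1.1 = y'.1.1 then (1:ℂ) else 0) * ((if y.2.1.1 = y'.2.1.1 then (1:ℂ) else 0) * (if y.2.2.1 = y'.2.2.1 then (1:ℂ) else 0)))) (1 : Matrix ((kAB_A × kAB_B) × (kAC_A × kAC_C) × (kBC_B × kBC_C)) ((kAB_A × kAB_B) × (kAC_A × kAC_C) × (kBC_B × kBC_C)) ℂ) by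
      simp [Matrix.submatrix_submatrix, Equiv.self_comp_symm, Matrix.submatrix_id_id]]
    rw [GhzNoGo.kron_conj_mul, Matrix.one_mul, GhzNoGo.kron_iso _ _ hUAB.1 (GhzNoGo.kron_iso _ _ hUAC.1 hUBC.1)]
  have hNPhiD : (Vbigᴴ * ((GhzNoGo.kron (Matrix.diagonal (fun _ : Fin 2 × εA => (1:ℂ))) (GhzNoGo.kron (Matrix.diagonal (fun _ : Fin 2 × εB => (1:ℂ))) (GhzNoGo.kron (Matrix.diagonal (fun _ : Fin 2 × εC => (1:ℂ))) (Matrix.diagonal (fun p : Fin 2 × εD => if p.1 = (0 : Fin 2) then (1:ℂ) else 0))))) * Vbig)) *ᵥ Φt = v := by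
    rw [← Matrix.mulVec_mulVec, ← Matrix.mulVec_mulVec, ← hfdef, hDD0f, hvdef]
  have huRD : u = ((GhzNoGo.kron ((GhzNoGo.kron UAD (GhzNoGo.kron UBD UCD))ᴴ * ((Matrix.of fun (y y' : ((kAD_A × kAD_D) × (kBD_B × kBD_D) × (kCD_C × kCD_D))) => (VDᴴ * (Matrix.diagonal (fun p : Fin 2 × εD => if p.1 = (0 : Fin 2) then (1:ℂ) else 0) * VD)) (y.1.2, y.2.1.2, y.2.2.2) (y'.1.2, y'.2.1.2, y'.2.2.2) * ((if y.1.1 = y'.1.1 then (1:ℂ) else 0) * ((if y.2.1.1 = y'.2.1.1 then (1:ℂ) else 0) * (if y.2.2.1 = y'.2.2.1 then (1:ℂ) else 0)))) * (GhzNoGo.kron UAD (GhzNoGo.kron UBD UCD))))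
      (1 : Matrix ((iABC_AB × iABD_AB) × (iABC_AC × iACD_AC) × (iABC_BC × iBCD_BC)) ((iABC_AB × iABD_AB) × (iABC_AC × iACD_AC) × (iABC_BC × iBCD_BC)) ℂ)).submatrix ⇑eD ⇑eD) *ᵥ Ψ := by
    rw [hudef, ← hNPhiD, hPhidef, Matrix.mulVec_mulVec, Matrix.mulVec_mulVec,
      Matrix.mul_assoc, hRD]
  set aD : ((iABD_AB × iABD_AD × iABD_BD) × (iACD_AC × iACD_AD × iACD_CD) × (iBCD_BC × iBCD_BD × iBCD_CD)) → ℂ :=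
    fun t => ∑ z : (iABD_AD × iACD_AD) × (iABD_BD × iBCD_BD) × (iACD_CD × iBCD_CD),
      ((GhzNoGo.kron UAD (GhzNoGo.kron UBD UCD))ᴴ * ((Matrix.of fun (y y' : ((kAD_A × kAD_D) × (kBD_B × kBD_D) × (kCD_C × kCD_D))) => (VDᴴ * (Matrix.diagonal (fun p : Fin 2 × εD => if p.1 = (0 : Fin 2) then (1:ℂ) else 0) * VD)) (y.1.2, y.2.1.2, y.2.2.2) (y'.1.2, y'.2.1.2, y'.2.2.2) * ((if y.1.1 = y'.1.1 then (1:ℂ) else 0) * ((if y.2.1.1 = y'.2.1.1 then (1:ℂ) else 0) * (if y.2.2.1 = y'.2.2.1 then (1:ℂ) else 0)))) * (GhzNoGo.kron UAD (GhzNoGo.kron UBD UCD)))) ((t.1.2.1, t.2.1.2.1), (t.1.2.2, t.2.2.2.1), (t.2.1.2.2, t.2.2.2.2)) z * (ψABD (t.1.1, z.1.1, z.2.1.1) * ψACD (t.2.1.1, z.1.2, z.2.2.1) * ψBCD (t.2.2.1, z.2.1.2, z.2.2.2)) with haD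
  have hlocD : ∀ x, u x = aD (x.2.1, x.2.2.1, x.2.2.2) * ψABC x.1 := by
    intro x
    rw [huRD, Matrix.submatrix_mulVec_equiv]
    simp only [Function.comp_apply]
    have h2 : (GhzNoGo.kron ((GhzNoGo.kron UAD (GhzNoGo.kron UBD UCD))ᴴ * ((Matrix.of fun (y y' : ((kAD_A × kAD_D) × (kBD_B × kBD_D) × (kCD_C × kCD_D))) => (VDᴴ * (Matrix.diagonal (fun p : Fin 2 × εD => if p.1 = (0 : Fin 2) then (1:ℂ) else 0) * VD)) (y.1.2, y.2.1.2, y.2.2.2) (y'.1.2, y'.2.1.2, y'.2.2.2) * ((if y.1.1 = y'.1.1 then (1:ℂ) else 0) * ((if y.2.1.1 = y'.2.1.1 then (1:ℂ) else 0) * (if y.2.2.1 = y'.2.2.1 then (1:ℂ) else 0)))) * (GhzNoGo.kron UAD (GhzNoGo.kron UBD UCD))))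
        (1 : Matrix ((iABC_AB × iABD_AB) × (iABC_AC × iACD_AC) × (iABC_BC × iBCD_BC)) ((iABC_AB × iABD_AB) × (iABC_AC × iACD_AC) × (iABC_BC × iBCD_BC)) ℂ) *ᵥ (Ψ ∘ ⇑eD.symm)) (⇑eD x)
        = ∑ z : (iABD_AD × iACD_AD) × (iABD_BD × iBCD_BD) × (iACD_CD × iBCD_CD), ((GhzNoGo.kron UAD (GhzNoGo.kron UBD UCD))ᴴ * ((Matrix.of fun (y y' : ((kAD_A × kAD_D) × (kBD_B × kBD_D) × (kCD_C × kCD_D))) => (VDᴴ * (Matrix.diagonal (fun p : Fin 2 × εD => if p.1 = (0 : Fin 2) then (1:ℂ) else 0) * VD)) (y.1.2, y.2.1.2, y.2.2.2) (y'.1.2, y'.2.1.2, y'.2.2.2) * ((if y.1.1 = y'.1.1 then (1:ℂ) else 0) * ((if y.2.1.1 = y'.2.1.1 then (1:ℂ) else 0) * (if y.2.2.1 = y'.2.2.1 then (1:ℂ) else 0)))) * (GhzNoGo.kron UAD (GhzNoGo.kron UBD UCD)))) (⇑eD x).1 z *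
            (Ψ ∘ ⇑eD.symm) (z, (⇑eD x).2) :=
      GhzNoGo.kron_one_mulVec _ _ _ _
    rw [h2]
    simp only [haD]
    rw [Finset.sum_mul]
    apply Finset.sum_congr rfl
    intro z _
    simp only [heD, hΨ, Equiv.coe_fn_mk, Equiv.coe_fn_symm_mk, Function.comp_apply,
      Prod.mk.eta]
    ring

  -- combine the four factorizations
  obtain ⟨pB, hpB⟩ := GhzNoGo.exists_ne_zero ψABD hψABD
  obtain ⟨pC, hpC⟩ := GhzNoGo.exists_ne_zero ψACD hψACD
  obtain ⟨pD, hpD⟩ := GhzNoGo.exists_ne_zero ψBCD hψBCD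
  obtain ⟨μ, hμ⟩ := GhzNoGo.factor_combine u ψABC ψABD ψACD ψBCD pB pC pD hpB hpC hpD
    aA aB aC aD hlocA hlocB hlocC hlocD
  have hufun : u = μ • Ψ := by
    funext x
    rw [hμ x]
    simp only [Pi.smul_apply, smul_eq_mul, hΨ]
  -- unitarity facts
  have hUiso : Ubigᴴ * Ubig = 1 := by
    rw [hUrepA]
    exact GhzNoGo.iso_submatrix _ rA eA
      (GhzNoGo.kron_iso _ _ (GhzNoGo.kron_iso _ _ hUAB.1 (GhzNoGo.kron_iso _ _ hUAC.1 hUAD.1)) (GhzNoGo.kron_iso _ _ hUBC.1 (GhzNoGo.kron_iso _ _ hUBD.1 hUCD.1)))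
  have hUco : Ubig * Ubigᴴ = 1 := by
    rw [hUrepA]
    exact GhzNoGo.coiso_submatrix _ rA eA
      (GhzNoGo.kron_coiso _ _ (GhzNoGo.kron_coiso _ _ hUAB.2 (GhzNoGo.kron_coiso _ _ hUAC.2 hUAD.2)) (GhzNoGo.kron_coiso _ _ hUBC.2 (GhzNoGo.kron_coiso _ _ hUBD.2 hUCD.2)))
  have hViso : Vbigᴴ * Vbig = 1 := by
    rw [hVrep]
    exact GhzNoGo.iso_submatrix _ (Equiv.refl _) eV
      (GhzNoGo.kron_iso _ _ hVA (GhzNoGo.kron_iso _ _ hVB (GhzNoGo.kron_iso _ _ hVC hVD)))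
  -- v = μ • Φt
  have hv : v = μ • Φt := by
    have h1 : Ubig *ᵥ u = v := by
      rw [hudef, Matrix.mulVec_mulVec, hUco, Matrix.one_mulVec]
    rw [← h1, hufun, Matrix.mulVec_smul, hPhidef]
  -- norm of Φt
  have hS1 : star Φt ⬝ᵥ Φt = 1 := by
    rw [hPhidef, GhzNoGo.iso_dot Ubig hUiso Ψ Ψ]
    simp only [dotProduct, Pi.star_apply, hΨ, Complex.star_def]
    exact GhzNoGo.prod_state_norm ψABC ψABD ψACD ψBCD hψABC hψABD hψACD hψBCD
  -- the key overlap
  have hsummand : ∀ w : (Fin 2 × εA) × (Fin 2 × εB) × (Fin 2 × εC) × (Fin 2 × εD),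
      star (f w) * g w = if (w.1.1 = (0:Fin 2) ∧ w.2.1.1 = (0:Fin 2) ∧ w.2.2.1.1 = (0:Fin 2) ∧
        w.2.2.2.1 = (0:Fin 2)) then
        (1/2 : ℂ) * ((starRingEnd ℂ) (χ (w.1.2, w.2.1.2, w.2.2.1.2, w.2.2.2.2)) *
          χ (w.1.2, w.2.1.2, w.2.2.1.2, w.2.2.2.2)) else 0 := by
    intro w
    by_cases hall : (w.1.1 = (0:Fin 2) ∧ w.2.1.1 = (0:Fin 2) ∧ w.2.2.1.1 = (0:Fin 2) ∧
        w.2.2.2.1 = (0:Fin 2))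
    · rw [if_pos hall]
      have hgw : g w = f w := by simp only [hg]; rw [if_pos hall]
      rw [hgw, hfw w, hall.1, hall.2.1, hall.2.2.1, hall.2.2.2, ghz4_zeros]
      have h2 : ((((1:ℝ) / Real.sqrt 2 : ℝ) : ℂ)) * ((((1:ℝ) / Real.sqrt 2 : ℝ) : ℂ)) = 1/2 := by
        rw [← Complex.ofReal_mul, div_mul_div_comm, one_mul,
          Real.mul_self_sqrt (by norm_num : (0:ℝ) ≤ 2)]
        norm_num
      rw [Complex.star_def, map_mul, Complex.conj_ofReal]
      calc (((1:ℝ) / Real.sqrt 2 : ℝ) : ℂ) * (starRingEnd ℂ) (χ (w.1.2, w.2.1.2, w.2.2.1.2, w.2.2.2.2)) *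
            ((((1:ℝ) / Real.sqrt 2 : ℝ) : ℂ) * χ (w.1.2, w.2.1.2, w.2.2.1.2, w.2.2.2.2))
          = ((((1:ℝ) / Real.sqrt 2 : ℝ) : ℂ) * (((1:ℝ) / Real.sqrt 2 : ℝ) : ℂ)) *
            ((starRingEnd ℂ) (χ (w.1.2, w.2.1.2, w.2.2.1.2, w.2.2.2.2)) *
              χ (w.1.2, w.2.1.2, w.2.2.1.2, w.2.2.2.2)) := by ring
        _ = _ := by rw [h2]
    · rw [if_neg hall]
      have hgw : g w = 0 := by simp only [hg]; rw [if_neg hall]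
      rw [hgw, mul_zero]
  have hS2 : star Φt ⬝ᵥ v = 1/2 := by
    rw [hvdef, Matrix.dotProduct_mulVec, ← Matrix.star_mulVec, ← hfdef]
    have hstep : star f ⬝ᵥ g = ∑ w : (Fin 2 × εA) × (Fin 2 × εB) × (Fin 2 × εC) × (Fin 2 × εD),
        (if (w.1.1 = (0:Fin 2) ∧ w.2.1.1 = (0:Fin 2) ∧ w.2.2.1.1 = (0:Fin 2) ∧
          w.2.2.2.1 = (0:Fin 2)) then
          (1/2 : ℂ) * ((starRingEnd ℂ) (χ (w.1.2, w.2.1.2, w.2.2.1.2, w.2.2.2.2)) *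
            χ (w.1.2, w.2.1.2, w.2.2.1.2, w.2.2.2.2)) else 0) := by
      simp only [dotProduct, Pi.star_apply]
      exact Finset.sum_congr rfl fun w _ => hsummand w
    rw [hstep]
    have hχ' : ∑ e1 : εA, ∑ e2 : εB, ∑ e3 : εC, ∑ e4 : εD,
        (starRingEnd ℂ) (χ (e1, e2, e3, e4)) * χ (e1, e2, e3, e4) = 1 := by
      have := GhzNoGo.sum_conj_mul_self χ hχ
      simp only [Fintype.sum_prod_type] at this
      exact this
    have h10 : ¬((1:Fin 2) = (0:Fin 2)) := by decide
    simp only [Fintype.sum_prod_type, Fin.sum_univ_two, h10, eq_self_iff_true, true_and,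
      false_and, and_true, and_false, if_true, if_false, Finset.sum_const_zero, add_zero,
      zero_add]
    simp only [← Finset.mul_sum]
    rw [hχ']
    norm_num
  have hmu : μ = 1/2 := by
    have := hS2
    rw [hv, dotProduct_smul, hS1, smul_eq_mul, mul_one] at this
    exact this
  -- endgame: the joint projector annihilates Φt
  have hSandD1 : (GhzNoGo.kron VA (GhzNoGo.kron VB (GhzNoGo.kron VC VD)))ᴴ * ((GhzNoGo.kron (Matrix.diagonal (fun _ : Fin 2 × εA => (1:ℂ))) (GhzNoGo.kron (Matrix.diagonal (fun _ : Fin 2 × εB => (1:ℂ))) (GhzNoGo.kron (Matrix.diagonal (fun _ : Fin 2 × εC => (1:ℂ))) (Matrix.diagonal (fun p : Fin 2 × εD => if p.1 = (1 : Fin 2) then (1:ℂ) else 0))))) * (GhzNoGo.kron VA (GhzNoGo.kron VB (GhzNoGo.kron VC VD)))) = GhzNoGo.kron (1 : Matrix (kAB_A × kAC_A × kAD_A) (kAB_A × kAC_A × kAD_A) ℂ) (GhzNoGo.kron (1 : Matrix (kAB_B × kBC_B × kBD_B) (kAB_B × kBC_B × kBD_B) ℂ) (GhzNoGo.kron (1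 : Matrix (kAC_C × kBC_C × kCD_C) (kAC_C × kBC_C × kCD_C) ℂ) (VDᴴ * (Matrix.diagonal (fun p : Fin 2 × εD => if p.1 = (1 : Fin 2) then (1:ℂ) else 0) * VD)))) := by
    rw [GhzNoGo.kron_conj_mul, GhzNoGo.kron_conj_mul, GhzNoGo.kron_conj_mul,
      Matrix.diagonal_one, Matrix.diagonal_one, Matrix.diagonal_one,
      Matrix.one_mul, Matrix.one_mul, Matrix.one_mul, hVA, hVB, hVC]
  have hNpartyD1 : Vbigᴴ * ((GhzNoGo.kron (Matrix.diagonal (fun _ : Fin 2 × εA => (1:ℂ))) (GhzNoGo.kron (Matrix.diagonal (fun _ : Fin 2 × εB => (1:ℂ))) (GhzNoGo.kron (Matrix.diagonal (fun _ : Fin 2 × εC => (1:ℂ))) (Matrix.diagonal (fun p : Fin 2 × εD => if p.1 = (1 : Fin 2) then (1:ℂ) else 0))))) * Vbig) = (GhzNoGo.kron (1 : Matrix (kAB_A × kAC_A × kAD_A) (kAB_A × kAC_A × kAD_A) ℂ) (GhzNoGo.kron (1 : Matrix (kAB_B × kBC_B × kBD_B) (kAB_B × kBC_B × kBD_B) ℂ)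 (GhzNoGo.kron (1 : Matrix (kAC_C × kBC_C × kCD_C) (kAC_C × kBC_C × kCD_C) ℂ) (VDᴴ * (Matrix.diagonal (fun p : Fin 2 × εD => if p.1 = (1 : Fin 2) then (1:ℂ) else 0) * VD))))).submatrix ⇑eV ⇑eV := by
    rw [hVrep, GhzNoGo.conj_submatrix2]
    simp only [Equiv.symm_symm, Equiv.refl_symm, Equiv.coe_refl, Matrix.submatrix_id_id]
    rw [hSandD1]
  have hSandAD : (GhzNoGo.kron VA (GhzNoGo.kron VB (GhzNoGo.kron VC VD)))ᴴ * ((GhzNoGo.kron (Matrix.diagonal (fun p : Fin 2 × εA => if p.1 = (0 : Fin 2) then (1:ℂ) else 0)) (GhzNoGo.kron (Matrix.diagonal (fun _ : Fin 2 × εB => (1:ℂ))) (GhzNoGo.kron (Matrix.diagonal (fun _ : Fin 2 × εC => (1:ℂ))) (Matrix.diagonal (fun p : Fin 2 × εD => if p.1 = (1 : Fin 2) then (1:ℂ) else 0))))) * (GhzNoGo.kron VA (GhzNoGo.kron VB (GhzNoGo.kron VC VD)))) = GhzNoGo.kron (VAᴴ * (Matrix.diagonal (fun p : Fin 2 ×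 εA => if p.1 = (0 : Fin 2) then (1:ℂ) else 0) * VA)) (GhzNoGo.kron (1 : Matrix (kAB_B × kBC_B × kBD_B) (kAB_B × kBC_B × kBD_B) ℂ) (GhzNoGo.kron (1 : Matrix (kAC_C × kBC_C × kCD_C) (kAC_C × kBC_C × kCD_C) ℂ) (VDᴴ * (Matrix.diagonal (fun p : Fin 2 × εD => if p.1 = (1 : Fin 2) then (1:ℂ) else 0) * VD)))) := by
    rw [GhzNoGo.kron_conj_mul, GhzNoGo.kron_conj_mul, GhzNoGo.kron_conj_mul,
      Matrix.diagonal_one, Matrix.diagonal_one,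
      Matrix.one_mul, Matrix.one_mul, hVB, hVC]
  have hNpartyAD : Vbigᴴ * ((GhzNoGo.kron (Matrix.diagonal (fun p : Fin 2 × εA => if p.1 = (0 : Fin 2) then (1:ℂ) else 0)) (GhzNoGo.kron (Matrix.diagonal (fun _ : Fin 2 × εB => (1:ℂ))) (GhzNoGo.kron (Matrix.diagonal (fun _ : Fin 2 × εC => (1:ℂ))) (Matrix.diagonal (fun p : Fin 2 × εD => if p.1 = (1 : Fin 2) then (1:ℂ) else 0))))) * Vbig) = (GhzNoGo.kron (VAᴴ * (Matrix.diagonal (fun p : Fin 2 × εA => if p.1 = (0 : Fin 2) then (1:ℂ) else 0) * VA)) (GhzNoGo.kron (1 : Matrix (kAB_B × kBC_B × kBD_B) (kAB_B × kBC_B × kBD_B) ℂ) (GhzNoGo.kron (1 : Matrix (kAC_C × kBC_C × kCD_C) (kAC_C × kBC_C × kCD_C) ℂ) (VDᴴ * (Matrix.diagonal (fun p : Fin 2 × εD => if p.1 = (1 : Fin 2) then (1:ℂ) else 0) * VD))))).submatrix ⇑eV ⇑eV := by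
    rw [hVrep, GhzNoGo.conj_submatrix2]
    simp only [Equiv.symm_symm, Equiv.refl_symm, Equiv.coe_refl, Matrix.submatrix_id_id]
    rw [hSandAD]
  have hprod : (Vbigᴴ * ((GhzNoGo.kron (Matrix.diagonal (fun p : Fin 2 × εA => if p.1 = (0 : Fin 2) then (1:ℂ) else 0)) (GhzNoGo.kron (Matrix.diagonal (fun _ : Fin 2 × εB => (1:ℂ))) (GhzNoGo.kron (Matrix.diagonal (fun _ : Fin 2 × εC => (1:ℂ))) (Matrix.diagonal (fun _ : Fin 2 × εD => (1:ℂ)))))) * Vbig)) * (Vbigᴴ * ((GhzNoGo.kron (Matrix.diagonal (fun _ : Fin 2 × εA => (1:ℂ))) (GhzNoGo.kron (Matrix.diagonal (fun _ : Fin 2 × εB => (1:ℂ))) (GhzNoGo.kron (Matrix.diagonal (fun _ : Fin 2 × εC => (1:ℂ))) (Matrix.diagonal (fun p : Fin 2 × εD => if p.1 = (1 : Fin 2) then (1:ℂ) else 0))))) * Vbig))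
      = Vbigᴴ * ((GhzNoGo.kron (Matrix.diagonal (fun p : Fin 2 × εA => if p.1 = (0 : Fin 2) then (1:ℂ) else 0)) (GhzNoGo.kron (Matrix.diagonal (fun _ : Fin 2 × εB => (1:ℂ))) (GhzNoGo.kron (Matrix.diagonal (fun _ : Fin 2 × εC => (1:ℂ))) (Matrix.diagonal (fun p : Fin 2 × εD => if p.1 = (1 : Fin 2) then (1:ℂ) else 0))))) * Vbig) := by
    rw [hNpartyA, hNpartyD1, Matrix.submatrix_mul_equiv _ _ _ eV _,
      GhzNoGo.kron_mul, GhzNoGo.kron_mul, GhzNoGo.kron_mul]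
    simp only [Matrix.one_mul, Matrix.mul_one]
    rw [hNpartyAD]
  have hND1 : (Vbigᴴ * ((GhzNoGo.kron (Matrix.diagonal (fun _ : Fin 2 × εA => (1:ℂ))) (GhzNoGo.kron (Matrix.diagonal (fun _ : Fin 2 × εB => (1:ℂ))) (GhzNoGo.kron (Matrix.diagonal (fun _ : Fin 2 × εC => (1:ℂ))) (Matrix.diagonal (fun p : Fin 2 × εD => if p.1 = (1 : Fin 2) then (1:ℂ) else 0))))) * Vbig)) *ᵥ Φt = Φt - v := by
    rw [← Matrix.mulVec_mulVec, ← Matrix.mulVec_mulVec, ← hfdef, hDD1f, Matrix.mulVec_sub,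
      ← hvdef, hfdef, Matrix.mulVec_mulVec, hViso, Matrix.one_mulVec]
  have hfinal : ((1 - μ) * μ) • Φt = 0 := by
    have h1 : (Vbigᴴ * ((GhzNoGo.kron (Matrix.diagonal (fun p : Fin 2 × εA => if p.1 = (0 : Fin 2) then (1:ℂ) else 0)) (GhzNoGo.kron (Matrix.diagonal (fun _ : Fin 2 × εB => (1:ℂ))) (GhzNoGo.kron (Matrix.diagonal (fun _ : Fin 2 × εC => (1:ℂ))) (Matrix.diagonal (fun _ : Fin 2 × εD => (1:ℂ)))))) * Vbig)) *ᵥ ((Vbigᴴ * ((GhzNoGo.kron (Matrix.diagonal (fun _ : Fin 2 × εA => (1:ℂ))) (GhzNoGo.kron (Matrix.diagonal (fun _ : Fin 2 × εB => (1:ℂ))) (GhzNoGo.kron (Matrix.diagonal (fun _ : Fin 2 × εC => (1:ℂ))) (Matrix.diagonal (fun p : Fin 2 × εD => if p.1 = (1 : Fin 2) then (1:ℂ) else 0))))) * Vbig)) *ᵥ Φt)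
        = ((1 - μ) * μ) • Φt := by
      rw [hND1, hv, show Φt - μ • Φt = (1 - μ) • Φt by rw [sub_smul, one_smul],
        Matrix.mulVec_smul, hNPhiA, hv, smul_smul]
    have h2 : (Vbigᴴ * ((GhzNoGo.kron (Matrix.diagonal (fun p : Fin 2 × εA => if p.1 = (0 : Fin 2) then (1:ℂ) else 0)) (GhzNoGo.kron (Matrix.diagonal (fun _ : Fin 2 × εB => (1:ℂ))) (GhzNoGo.kron (Matrix.diagonal (fun _ : Fin 2 × εC => (1:ℂ))) (Matrix.diagonal (fun _ : Fin 2 × εD => (1:ℂ)))))) * Vbig)) *ᵥ ((Vbigᴴ * ((GhzNoGo.kron (Matrix.diagonal (fun _ : Fin 2 × εA => (1:ℂ))) (GhzNoGo.kron (Matrix.diagonal (fun _ : Fin 2 × εB => (1:ℂ))) (GhzNoGo.kron (Matrix.diagonal (fun _ : Fin 2 × εC => (1:ℂ))) (Matrix.diagonal (fun p : Fin 2 × εD => if p.1 = (1 : Fin 2) then (1:ℂ) else 0))))) * Vbig)) *ᵥ Φt) = 0 := by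
      rw [Matrix.mulVec_mulVec, hprod, ← Matrix.mulVec_mulVec, ← Matrix.mulVec_mulVec,
        ← hfdef, hDADf, Matrix.mulVec_zero]
    rw [← h1, h2]
  have hPhi0 : Φt = 0 := by
    have hne : ((1 - μ) * μ : ℂ) ≠ 0 := by
      rw [hmu]; norm_num
    rcases smul_eq_zero.mp hfinal with h | h
    · exact absurd h hne
    · exact h
  rw [hPhi0] at hS1
  simp only [dotProduct_zero] at hS1
  exact one_ne_zero hS1.symm

end
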